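/- arXiv:2001.02197 — 3 statements merged into one kernel-verified Lean document; each statement's English description precedes it below -/
import Mathlib

section
/- For any positive numbers l and M there exists C > 0 such that for all c ∈ ℝ, all q ∈ L¹_loc(ℝ) with ∫_c^{c+l} |1+q(x)| dx ≤ M, and every solution φ of -φ'' + qφ = 0 on [c,c+l], one has ∫_c^{c+l} |φ(t)|² dt ≥ C (|φ(c)|² + |φ'(c)|²). -/
open MeasureTheory

/-- Bound the absolute value of an interval integral over a subinterval of `[c,d]`
by the integral of the absolute value over `[c,d]`. -/
lemma aux_abs_intervalIntegral_le {f : ℝ → ℝ} {a b c d : ℝ}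
    (hf : IntegrableOn f (Set.Icc c d))
    (ha : a ∈ Set.Icc c d) (hb : b ∈ Set.Icc c d) :
    |∫ x in a..b, f x| ≤ ∫ x in c..d, |f x| := by
  have hcd : c ≤ d := le_trans ha.1 ha.2
  have key : ∀ a b : ℝ, a ∈ Set.Icc c d → b ∈ Set.Icc c d → a ≤ b →
      |∫ x in a..b, f x| ≤ ∫ x in c..d, |f x| := by
    intro a b ha hb hab
    have h1 : |∫ x in a..b, f x| ≤ ∫ x in a..b, |f x| :=
      intervalIntegral.abs_integral_le_integral_abs hab
    have h2 : (∫ x in a..b, |f x|) ≤ ∫ x in c..d, |f x| := by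
      rw [intervalIntegral.integral_of_le hab, intervalIntegral.integral_of_le hcd]
      refine setIntegral_mono_set ((hf.mono_set Set.Ioc_subset_Icc_self).abs) ?_ ?_
      · filter_upwards with x using abs_nonneg _
      · exact HasSubset.Subset.eventuallyLE (Set.Ioc_subset_Ioc ha.1 hb.2)
    linarith
  rcases le_total a b with h | h
  · exact key a b ha hb h
  · rw [intervalIntegral.integral_symm, abs_neg]
    exact key b a hb ha h

set_option maxHeartbeats 1000000 in
/-- Lower bound on the local L² mass of a solution of `-φ'' + qφ = 0` on `[c,c+l]`,
with a constant depending only on `l` and `M`. -/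
theorem stmt_1 (l M : ℝ) (hl : 0 < l) (hM : 0 < M) :
    ∃ C > 0, ∀ (c : ℝ) (q φ φ' : ℝ → ℝ),
      IntegrableOn q (Set.Icc c (c + l)) →
      (∫ x in c..(c + l), |1 + q x|) ≤ M →
      (∀ x ∈ Set.Icc c (c + l), HasDerivAt φ (φ' x) x) →
      (∀ x ∈ Set.Icc c (c + l), HasDerivAt φ' (q x * φ x) x) →
      C * (|φ c| ^ 2 + |φ' c| ^ 2) ≤ ∫ t in c..(c + l), |φ t| ^ 2 := by
  obtain ⟨K', hK'def⟩ : ∃ x : ℝ, x = l ^ 2 + (2 + (M + l) * l) ^ 2 := ⟨_, rfl⟩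
  obtain ⟨E, hEdef⟩ : ∃ x : ℝ, x = 4 * K' * (1 + 2 * l ^ 2 * (M + l) ^ 2) + 16 * K' ^ 2 :=
    ⟨_, rfl⟩
  have hK' : 0 < K' := by rw [hK'def]; positivity
  have hE : 0 < E := by rw [hEdef]; subst hK'def; positivity
  refine ⟨l ^ 3 / E, by positivity, ?_⟩
  intro c q φ φ' hq hqM hφ hφ'
  have hcl : c ≤ c + l := by linarith
  have hne : (Set.Icc c (c + l)).Nonempty := Set.nonempty_Icc.2 hcl
  have hcmem : c ∈ Set.Icc c (c + l) := ⟨le_rfl, hcl⟩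
  have hφc : ContinuousOn φ (Set.Icc c (c + l)) :=
    fun x hx => (hφ x hx).continuousAt.continuousWithinAt
  have hφ'c : ContinuousOn φ' (Set.Icc c (c + l)) :=
    fun x hx => (hφ' x hx).continuousAt.continuousWithinAt
  have toII : ∀ (f : ℝ → ℝ), IntegrableOn f (Set.Icc c (c + l)) →
      IntervalIntegrable f volume c (c + l) := by
    intro f h
    apply IntegrableOn.intervalIntegrable
    rwa [Set.uIcc_of_le hcl]
  -- the maximum point of |φ|
  obtain ⟨xm, hxm, hmax⟩ := isCompact_Icc.exists_isMaxOn hne hφc.abs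
  set P : ℝ := |φ xm| with hPdef
  have hP : ∀ x ∈ Set.Icc c (c + l), |φ x| ≤ P := fun x hx => hmax hx
  have hP0 : 0 ≤ P := abs_nonneg _
  -- integrability facts
  have hone : IntegrableOn (fun _ : ℝ => (1 : ℝ)) (Set.Icc c (c + l)) :=
    integrableOn_const measure_Icc_lt_top.ne
  have h1q : IntegrableOn (fun x => 1 + q x) (Set.Icc c (c + l)) := hone.add hq
  have hqφ : IntegrableOn (fun t => q t * φ t) (Set.Icc c (c + l)) :=
    hq.mul_continuousOn hφc isCompact_Icc
  -- ∫ |q| ≤ M + l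
  have hqabs_le : (∫ x in c..(c + l), |q x|) ≤ M + l := by
    have h1 : (∫ x in c..(c + l), |q x|) ≤ ∫ x in c..(c + l), (|1 + q x| + 1) := by
      apply intervalIntegral.integral_mono_on hcl (toII _ hq.abs)
        ((toII _ h1q.abs).add (toII _ hone))
      intro x _
      calc |q x| = |(1 + q x) + (-1)| := by ring_nf
        _ ≤ |1 + q x| + |(-1 : ℝ)| := abs_add_le _ _
        _ = |1 + q x| + 1 := by norm_num
    have h2 : (∫ x in c..(c + l), (|1 + q x| + 1)) =
        (∫ x in c..(c + l), |1 + q x|) + l := by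
      rw [intervalIntegral.integral_add (toII _ h1q.abs) (toII _ hone)]
      simp
    linarith
  -- step (A): |φ' x - φ' c| ≤ (M + l) * P on the interval
  have hA : ∀ x ∈ Set.Icc c (c + l), |φ' x - φ' c| ≤ (M + l) * P := by
    intro x hx
    have hftc : (∫ t in c..x, q t * φ t) = φ' x - φ' c := by
      apply intervalIntegral.integral_eq_sub_of_hasDerivAt
      · intro t ht
        rw [Set.uIcc_of_le hx.1] at ht
        exact hφ' t (Set.Icc_subset_Icc le_rfl hx.2 ht)
      · apply IntegrableOn.intervalIntegrable
        apply hqφ.mono_set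
        rw [Set.uIcc_of_le hx.1]
        exact Set.Icc_subset_Icc le_rfl hx.2
    calc |φ' x - φ' c| = |∫ t in c..x, q t * φ t| := by rw [hftc]
      _ ≤ ∫ t in c..(c + l), |q t * φ t| := aux_abs_intervalIntegral_le hqφ hcmem hx
      _ ≤ ∫ t in c..(c + l), |q t| * P := by
          apply intervalIntegral.integral_mono_on hcl (toII _ hqφ.abs)
            ((toII _ hq.abs).mul_const P)
          intro t ht
          rw [abs_mul]
          exact mul_le_mul_of_nonneg_left (hP t ht) (abs_nonneg _)
      _ = (∫ t in c..(c + l), |q t|) * P := by rw [intervalIntegral.integral_mul_const]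
      _ ≤ (M + l) * P := mul_le_mul_of_nonneg_right hqabs_le hP0
  -- step (ii): l * |φ' c| ≤ (2 + (M + l) * l) * P
  have hftc2 : (∫ t in c..(c + l), φ' t) = φ (c + l) - φ c := by
    apply intervalIntegral.integral_eq_sub_of_hasDerivAt
    · intro t ht
      rw [Set.uIcc_of_le hcl] at ht
      exact hφ t ht
    · exact toII _ hφ'c.integrableOn_Icc
  have h_ii : l * |φ' c| ≤ (2 + (M + l) * l) * P := by
    have e1 : (∫ t in c..(c + l), (φ' t - φ' c)) = (φ (c + l) - φ c) - l * φ' c := by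
      rw [intervalIntegral.integral_sub (toII _ hφ'c.integrableOn_Icc)
        intervalIntegrable_const, hftc2, intervalIntegral.integral_const]
      simp
    have e2 : |∫ t in c..(c + l), (φ' t - φ' c)| ≤ l * ((M + l) * P) := by
      calc |∫ t in c..(c + l), (φ' t - φ' c)|
          ≤ ∫ t in c..(c + l), |φ' t - φ' c| :=
            intervalIntegral.abs_integral_le_integral_abs hcl
        _ ≤ ∫ t in c..(c + l), (M + l) * P := by
            apply intervalIntegral.integral_mono_on hcl
              (toII _ (hφ'c.sub continuousOn_const).abs.integrableOn_Icc)
              intervalIntegrable_const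
            exact hA
        _ = l * ((M + l) * P) := by
            rw [intervalIntegral.integral_const]
            simp
    have e3 : |l * φ' c| ≤ |φ (c + l) - φ c| + |∫ t in c..(c + l), (φ' t - φ' c)| := by
      have : l * φ' c = (φ (c + l) - φ c) - ∫ t in c..(c + l), (φ' t - φ' c) := by
        linarith [e1]
      rw [this]
      exact abs_sub _ _
    have e4 : |φ (c + l) - φ c| ≤ 2 * P := by
      calc |φ (c + l) - φ c| ≤ |φ (c + l)| + |φ c| := abs_sub _ _
        _ ≤ P + P := add_le_add (hP _ ⟨hcl, le_rfl⟩) (hP c hcmem)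
        _ = 2 * P := by ring
    have e5 : |l * φ' c| = l * |φ' c| := by rw [abs_mul, abs_of_pos hl]
    nlinarith [e2, e3, e4]
  -- the minimum point of φ²
  obtain ⟨x₀, hx₀, hmin⟩ := isCompact_Icc.exists_isMinOn hne (hφc.pow 2)
  set S : ℝ := ∫ t in c..(c + l), |φ t| ^ 2 with hSdef
  have hSeq : S = ∫ t in c..(c + l), (φ t) ^ 2 := by
    apply intervalIntegral.integral_congr
    intro t _
    exact sq_abs _
  have hsqint : IntegrableOn (fun t => (φ t) ^ 2) (Set.Icc c (c + l)) :=
    (hφc.pow 2).integrableOn_Icc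
  have hSmin : l * (φ x₀) ^ 2 ≤ S := by
    rw [hSeq]
    have : (∫ t in c..(c + l), (φ x₀) ^ 2) ≤ ∫ t in c..(c + l), (φ t) ^ 2 := by
      apply intervalIntegral.integral_mono_on hcl intervalIntegrable_const (toII _ hsqint)
      intro t ht
      exact hmin ht
    rw [intervalIntegral.integral_const] at this
    simp at this
    nlinarith [this]
  have hS0 : 0 ≤ S := by
    rw [hSeq]
    apply intervalIntegral.integral_nonneg hcl
    intro t _
    positivity
  -- J := ∫ |φ| and Cauchy–Schwarz J² ≤ l S
  set J : ℝ := ∫ t in c..(c + l), |φ t| with hJdef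
  have hJ0 : 0 ≤ J := intervalIntegral.integral_nonneg hcl fun t _ => abs_nonneg _
  have habsint : IntegrableOn (fun t => |φ t|) (Set.Icc c (c + l)) :=
    hφc.abs.integrableOn_Icc
  have h_iv : J ^ 2 ≤ l * S := by
    have hnn : 0 ≤ ∫ t in c..(c + l), (l * |φ t| - J) ^ 2 :=
      intervalIntegral.integral_nonneg hcl fun t _ => sq_nonneg _
    have hexp : (∫ t in c..(c + l), (l * |φ t| - J) ^ 2) =
        l ^ 2 * S - 2 * l * J * J + l * J ^ 2 := by
      have hcongr : (∫ t in c..(c + l), (l * |φ t| - J) ^ 2) =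
          ∫ t in c..(c + l), (l ^ 2 * (φ t) ^ 2 - (2 * l * J) * |φ t| + J ^ 2) := by
        apply intervalIntegral.integral_congr
        intro t _
        linear_combination (l ^ 2) * (sq_abs (φ t))
      rw [hcongr, intervalIntegral.integral_add
        (((toII _ hsqint).const_mul _).sub ((toII _ habsint).const_mul _))
        intervalIntegrable_const,
        intervalIntegral.integral_sub ((toII _ hsqint).const_mul _)
        ((toII _ habsint).const_mul _),
        intervalIntegral.integral_const_mul, intervalIntegral.integral_const_mul,
        intervalIntegral.integral_const]
      rw [← hSeq, ← hJdef]
      simp only [smul_eq_mul, add_sub_cancel_left]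
    have h5 : 0 ≤ l ^ 2 * S - 2 * l * J * J + l * J ^ 2 := hexp ▸ hnn
    have h6 : l * J ^ 2 ≤ l * (l * S) := by nlinarith [h5]
    exact le_of_mul_le_mul_left h6 hl
  -- step (i): l P² ≤ S + 2 l (a₁ + (M+l) P) J
  set a₀ : ℝ := |φ c| with ha₀def
  set a₁ : ℝ := |φ' c| with ha₁def
  have ha₀0 : 0 ≤ a₀ := abs_nonneg _
  have ha₁0 : 0 ≤ a₁ := abs_nonneg _
  have h_iii : a₀ ≤ P := hP c hcmem
  have hD' : ∀ x ∈ Set.Icc c (c + l), |φ' x| ≤ a₁ + (M + l) * P := by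
    intro x hx
    have h := hA x hx
    calc |φ' x| = |φ' c + (φ' x - φ' c)| := by ring_nf
      _ ≤ |φ' c| + |φ' x - φ' c| := abs_add_le _ _
      _ ≤ a₁ + (M + l) * P := by rw [ha₁def]; linarith
  have hg'cont : ContinuousOn (fun t => φ' t * φ t + φ t * φ' t) (Set.Icc c (c + l)) :=
    (hφ'c.mul hφc).add (hφc.mul hφ'c)
  have h_i : l * P ^ 2 ≤ S + 2 * l * (a₁ + (M + l) * P) * J := by
    have hftc3 : (∫ t in x₀..xm, (φ' t * φ t + φ t * φ' t)) =
        φ xm * φ xm - φ x₀ * φ x₀ := by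
      apply intervalIntegral.integral_eq_sub_of_hasDerivAt
      · intro t ht
        have htI : t ∈ Set.Icc c (c + l) := Set.uIcc_subset_Icc hx₀ hxm ht
        exact (hφ t htI).mul (hφ t htI)
      · exact (hg'cont.mono (Set.uIcc_subset_Icc hx₀ hxm)).intervalIntegrable
    have habs : |∫ t in x₀..xm, (φ' t * φ t + φ t * φ' t)| ≤
        2 * (a₁ + (M + l) * P) * J := by
      calc |∫ t in x₀..xm, (φ' t * φ t + φ t * φ' t)|
          ≤ ∫ t in c..(c + l), |φ' t * φ t + φ t * φ' t| :=
            aux_abs_intervalIntegral_le hg'cont.integrableOn_Icc hx₀ hxm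
        _ ≤ ∫ t in c..(c + l), (2 * (a₁ + (M + l) * P)) * |φ t| := by
            apply intervalIntegral.integral_mono_on hcl
              (toII _ hg'cont.abs.integrableOn_Icc) ((toII _ habsint).const_mul _)
            intro t ht
            have e : φ' t * φ t + φ t * φ' t = 2 * (φ t * φ' t) := by ring
            rw [e, abs_mul, abs_mul]
            have h2 : |(2 : ℝ)| = 2 := by norm_num
            rw [h2]
            have := hD' t ht
            nlinarith [abs_nonneg (φ t), abs_nonneg (φ' t), hP t ht]
        _ = 2 * (a₁ + (M + l) * P) * J := by
            rw [intervalIntegral.integral_const_mul]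
    have hPsq : P ^ 2 = φ xm * φ xm := by rw [hPdef, sq_abs]; ring
    have hx₀sq : φ x₀ * φ x₀ = (φ x₀) ^ 2 := by ring
    have hTle : φ xm * φ xm - φ x₀ * φ x₀ ≤ 2 * (a₁ + (M + l) * P) * J := by
      calc φ xm * φ xm - φ x₀ * φ x₀ = ∫ t in x₀..xm, (φ' t * φ t + φ t * φ' t) :=
            hftc3.symm
        _ ≤ |∫ t in x₀..xm, (φ' t * φ t + φ t * φ' t)| := le_abs_self _
        _ ≤ 2 * (a₁ + (M + l) * P) * J := habs
    -- multiply by l and use l φ(x₀)² ≤ S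
    have hB0 : 0 ≤ a₁ + (M + l) * P := by positivity
    nlinarith [hSmin, hTle, hl, mul_le_mul_of_nonneg_left hTle hl.le]
  -- step 1: l P² ≤ 2 (1 + 2 l² (M+l)²) S + 4 l a₁ J
  have step1 : l * P ^ 2 ≤ 2 * (1 + 2 * l ^ 2 * (M + l) ^ 2) * S + 4 * l * a₁ * J := by
    nlinarith [h_i, mul_nonneg (by positivity : (0:ℝ) ≤ l / 2)
      (sq_nonneg (P - 2 * (M + l) * J)),
      mul_le_mul_of_nonneg_left h_iv (by positivity : (0:ℝ) ≤ 2 * l * (M + l) ^ 2)]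
  -- step 2: l² (a₀² + a₁²) ≤ K' P²
  have step2 : l ^ 2 * (a₀ ^ 2 + a₁ ^ 2) ≤ K' * P ^ 2 := by
    have h1 : (l * a₁) * (l * a₁) ≤ ((2 + (M + l) * l) * P) * ((2 + (M + l) * l) * P) :=
      mul_self_le_mul_self (by positivity) h_ii
    have h2 : a₀ * a₀ ≤ P * P := mul_self_le_mul_self ha₀0 h_iii
    have h3 : l ^ 2 * (a₀ * a₀) ≤ l ^ 2 * (P * P) :=
      mul_le_mul_of_nonneg_left h2 (by positivity)
    rw [hK'def]
    nlinarith [h1, h3]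
  -- AM-GM: 4 K' l a₁ J ≤ l³/2 a₁² + 8 K'² S
  have h_amgm : 4 * K' * l * a₁ * J ≤ l ^ 3 / 2 * a₁ ^ 2 + 8 * K' ^ 2 * S := by
    have h1 : 0 ≤ (l ^ 2 * a₁ - 4 * K' * J) ^ 2 := sq_nonneg _
    have h3 : 16 * K' ^ 2 * J ^ 2 ≤ 16 * K' ^ 2 * (l * S) :=
      mul_le_mul_of_nonneg_left h_iv (by positivity)
    have h4 : 8 * K' * l ^ 2 * a₁ * J ≤ l ^ 4 * a₁ ^ 2 + 16 * K' ^ 2 * (l * S) := by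
      nlinarith [h1, h3]
    have h2l : (0 : ℝ) < 2 * l := by positivity
    apply le_of_mul_le_mul_left _ h2l
    calc 2 * l * (4 * K' * l * a₁ * J) = 8 * K' * l ^ 2 * a₁ * J := by ring
      _ ≤ l ^ 4 * a₁ ^ 2 + 16 * K' ^ 2 * (l * S) := h4
      _ = 2 * l * (l ^ 3 / 2 * a₁ ^ 2 + 8 * K' ^ 2 * S) := by ring
  -- combine everything: l³ (a₀² + a₁²) ≤ E S
  have hkey : l ^ 3 * (a₀ ^ 2 + a₁ ^ 2) ≤ E * S := by
    have m1 : l ^ 3 * (a₀ ^ 2 + a₁ ^ 2) ≤ l * (K' * P ^ 2) := by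
      linarith [mul_le_mul_of_nonneg_left step2 hl.le]
    have m2 : K' * (l * P ^ 2) ≤
        K' * (2 * (1 + 2 * l ^ 2 * (M + l) ^ 2) * S + 4 * l * a₁ * J) :=
      mul_le_mul_of_nonneg_left step1 hK'.le
    have m3 : l ^ 3 * a₁ ^ 2 ≤ l ^ 3 * (a₀ ^ 2 + a₁ ^ 2) := by
      nlinarith [mul_nonneg (pow_nonneg hl.le 3) (sq_nonneg a₀)]
    have m2' : K' * (l * P ^ 2) = l * (K' * P ^ 2) := by ring
    have hES : E * S = 4 * K' * (1 + 2 * l ^ 2 * (M + l) ^ 2) * S + 16 * K' ^ 2 * S := by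
      rw [hEdef]; ring
    linarith [m1, m2, m3, h_amgm, m2', hES]
  -- conclude
  rw [div_mul_eq_mul_div, div_le_iff₀ hE]
  calc l ^ 3 * (a₀ ^ 2 + a₁ ^ 2) ≤ E * S := hkey
    _ = S * E := by ring
end

section
/- Let (X_j)_{j≥1} be independent real random variables with X_j bounded by a deterministic constant K, E[X_j] = 0, and E[X_j²] = 1. Let (A_j), (B_j) be random variables with A_j, B_j independent of X_j and |A_j|, |B_j| ≤ K. Let 0 < α < 1/2 and define R_n = ∏_{j=1}^{n} exp(X_j A_j / j^{α} + X_j² B_j / j^{2α}). Then there exists C > 0 (depending only on K and α) such that E[R_n²] ≤ exp(C n^{1-2α}) for all n ≥ 1. -/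
open MeasureTheory ProbabilityTheory

lemma exp_le_quad (x : ℝ) : Real.exp x ≤ 1 + x + x ^ 2 * Real.exp |x| := by
  rcases le_or_gt 0 x with hx | hx
  · rw [abs_of_nonneg hx]
    have hexp : 0 < Real.exp x := Real.exp_pos x
    have h0 : 1 - x ≤ Real.exp (-x) := by linarith [Real.add_one_le_exp (-x)]
    have hmul : Real.exp (-x) * Real.exp x = 1 := by
      rw [← Real.exp_add]; simp
    have h1 : (1 - x) * Real.exp x ≤ 1 := by nlinarith
    nlinarith
  · rw [abs_of_neg hx]
    have hexp : 0 < Real.exp x := Real.exp_pos x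
    have h2 : 1 + -x ≤ Real.exp (-x) := by linarith [Real.add_one_le_exp (-x)]
    have hprod : Real.exp x * Real.exp (-x) = 1 := by rw [← Real.exp_add]; simp
    have hA : Real.exp x * (1 + -x) ≤ 1 := by nlinarith
    have hB : (1 : ℝ) ≤ Real.exp (-x) := by nlinarith
    have hx2 : 0 < x ^ 2 := pow_two_pos_of_ne_zero (ne_of_lt hx)
    have hd : (1 : ℝ) ≤ (1 + x + x ^ 2) * (1 - x) := by nlinarith
    have h1x : (0 : ℝ) < 1 - x := by linarith
    have hc : Real.exp x * (1 - x) ≤ 1 := by nlinarith [hA]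
    have hfin : Real.exp x ≤ 1 + x + x ^ 2 := by nlinarith [hc, hd, h1x]
    have hlast : x ^ 2 ≤ x ^ 2 * Real.exp (-x) := le_mul_of_one_le_right (sq_nonneg x) hB
    linarith

lemma sum_rpow_le {p : ℝ} (hp0 : 0 < p) (hp1 : p ≤ 1) (n : ℕ) :
    ∑ j ∈ Finset.Icc 1 n, ((j : ℝ)) ^ (p - 1) ≤ (1 / p) * (n : ℝ) ^ p := by
  induction n with
  | zero => simp [Real.zero_rpow hp0.ne']
  | succ m ih =>
    rw [Finset.sum_Icc_succ_top (Nat.le_add_left 1 m)]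
    have hN0 : (0 : ℝ) < ((m : ℝ) + 1) := by positivity
    have hN1 : (1 : ℝ) ≤ ((m : ℝ) + 1) := by
      have : (0:ℝ) ≤ (m:ℝ) := Nat.cast_nonneg m
      linarith
    have hs : (-1 : ℝ) ≤ -1 / ((m : ℝ) + 1) := by
      rw [neg_div]
      simp only [neg_le_neg_iff]
      rw [div_le_one hN0]
      exact hN1
    have hB := rpow_one_add_le_one_add_mul_self hs hp0.le hp1
    have hno : (0:ℝ) ≤ 1 + -1 / ((m : ℝ) + 1) := by
      have : -1 / ((m : ℝ) + 1) ≥ -1 := hs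
      linarith
    have h1 : (m : ℝ) = ((m : ℝ) + 1) * (1 + -1 / ((m : ℝ) + 1)) := by
      field_simp
      ring
    have h2 : (m : ℝ) ^ p = ((m : ℝ) + 1) ^ p * (1 + -1 / ((m : ℝ) + 1)) ^ p := by
      rw [h1, Real.mul_rpow hN0.le hno]
      rw [← h1]
    have h3 : ((m : ℝ) + 1) ^ p * (1 + -1 / ((m : ℝ) + 1)) ^ p
        ≤ ((m : ℝ) + 1) ^ p * (1 + p * (-1 / ((m : ℝ) + 1))) :=
      mul_le_mul_of_nonneg_left hB (Real.rpow_nonneg hN0.le p)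
    have h4 : ((m : ℝ) + 1) ^ p * (1 / ((m : ℝ) + 1)) = ((m : ℝ) + 1) ^ (p - 1) := by
      rw [Real.rpow_sub hN0, Real.rpow_one]
      ring
    have h5 : (m : ℝ) ^ p ≤ ((m : ℝ) + 1) ^ p - p * ((m : ℝ) + 1) ^ (p - 1) := by
      rw [h2]
      calc ((m : ℝ) + 1) ^ p * (1 + -1 / ((m : ℝ) + 1)) ^ p
          ≤ ((m : ℝ) + 1) ^ p * (1 + p * (-1 / ((m : ℝ) + 1))) := h3
        _ = ((m : ℝ) + 1) ^ p - p * (((m : ℝ) + 1) ^ p * (1 / ((m : ℝ) + 1))) := by ring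
        _ = ((m : ℝ) + 1) ^ p - p * ((m : ℝ) + 1) ^ (p - 1) := by rw [h4]
    have hcast : ((m + 1 : ℕ) : ℝ) = (m : ℝ) + 1 := by push_cast; ring
    rw [hcast]
    have h6 : p * ((m : ℝ) + 1) ^ (p - 1) ≤ ((m : ℝ) + 1) ^ p - (m : ℝ) ^ p := by linarith
    have h7 : ((m : ℝ) + 1) ^ (p - 1) = (1 / p) * (p * ((m : ℝ) + 1) ^ (p - 1)) := by
      field_simp
    have h8 : ((m : ℝ) + 1) ^ (p - 1) ≤ (1 / p) * (((m : ℝ) + 1) ^ p - (m : ℝ) ^ p) := by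
      rw [h7]
      exact mul_le_mul_of_nonneg_left h6 (by positivity)
    linarith [ih]

noncomputable def ccst (K : ℝ) : ℝ :=
  2 * K ^ 3 + (2 * K ^ 2 + 2 * K ^ 3) ^ 2 * Real.exp (2 * K ^ 2 + 2 * K ^ 3)

lemma ccst_pos {K : ℝ} (hK : 0 < K) : 0 < ccst K := by
  unfold ccst
  have h1 : 0 < K ^ 3 := pow_pos hK 3
  have h2 : 0 ≤ (2 * K ^ 2 + 2 * K ^ 3) ^ 2 * Real.exp (2 * K ^ 2 + 2 * K ^ 3) := by positivity
  linarith

lemma key_exp {K x a b t : ℝ} (hK : 0 < K) (hx : |x| ≤ K) (ha : |a| ≤ K) (hb : |b| ≤ K)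
    (ht0 : 0 ≤ t) (ht1 : t ≤ 1) :
    Real.exp (x * a * t + x ^ 2 * b * t ^ 2) ^ 2 ≤ 1 + 2 * t * (x * a) + ccst K * t ^ 2 := by
  have hK2 : 0 ≤ K := hK.le
  have hxa : |x * a| ≤ K ^ 2 := by
    rw [abs_mul]
    calc |x| * |a| ≤ K * K := mul_le_mul hx ha (abs_nonneg a) hK2
      _ = K ^ 2 := by ring
  have hx2b : |x ^ 2 * b| ≤ K ^ 3 := by
    rw [abs_mul, abs_pow]
    calc |x| ^ 2 * |b| ≤ K ^ 2 * K := by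
          apply mul_le_mul _ hb (abs_nonneg b) (by positivity)
          exact pow_le_pow_left₀ (abs_nonneg x) hx 2
      _ = K ^ 3 := by ring
  set u := 2 * (x * a * t + x ^ 2 * b * t ^ 2) with hu_def
  have hsq : Real.exp (x * a * t + x ^ 2 * b * t ^ 2) ^ 2 = Real.exp u := by
    rw [sq, ← Real.exp_add, hu_def]; ring_nf
  have ht2 : t ^ 2 ≤ t := by nlinarith
  have ht2' : 0 ≤ t ^ 2 := sq_nonneg t
  have habs1 : |x * a * t| ≤ K ^ 2 * t := by
    rw [abs_mul, abs_of_nonneg ht0]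
    exact mul_le_mul_of_nonneg_right hxa ht0
  have habs2 : |x ^ 2 * b * t ^ 2| ≤ K ^ 3 * t ^ 2 := by
    rw [abs_mul, abs_of_nonneg ht2']
    exact mul_le_mul_of_nonneg_right hx2b ht2'
  have hKt : K ^ 2 * t ≤ K ^ 2 := by nlinarith [sq_nonneg K]
  have hKt2 : K ^ 3 * t ^ 2 ≤ K ^ 3 := by nlinarith [pow_pos hK 3]
  have huabs : |u| ≤ 2 * K ^ 2 * t + 2 * K ^ 3 * t ^ 2 := by
    rw [hu_def]
    calc |2 * (x * a * t + x ^ 2 * b * t ^ 2)|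
        = 2 * |x * a * t + x ^ 2 * b * t ^ 2| := by rw [abs_mul]; norm_num
      _ ≤ 2 * (|x * a * t| + |x ^ 2 * b * t ^ 2|) := by
          have := abs_add_le (x * a * t) (x ^ 2 * b * t ^ 2)
          linarith
      _ ≤ 2 * K ^ 2 * t + 2 * K ^ 3 * t ^ 2 := by nlinarith
  have huM : |u| ≤ 2 * K ^ 2 + 2 * K ^ 3 := by
    calc |u| ≤ 2 * K ^ 2 * t + 2 * K ^ 3 * t ^ 2 := huabs
      _ ≤ 2 * K ^ 2 + 2 * K ^ 3 := by nlinarith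
  have hquad := exp_le_quad u
  have hexpmono : Real.exp |u| ≤ Real.exp (2 * K ^ 2 + 2 * K ^ 3) := Real.exp_le_exp.mpr huM
  have hu2 : u ^ 2 ≤ (2 * K ^ 2 + 2 * K ^ 3) ^ 2 * t ^ 2 := by
    have h1 : |u| ≤ (2 * K ^ 2 + 2 * K ^ 3) * t := by
      calc |u| ≤ 2 * K ^ 2 * t + 2 * K ^ 3 * t ^ 2 := huabs
        _ ≤ (2 * K ^ 2 + 2 * K ^ 3) * t := by nlinarith [pow_pos hK 3]
    have h2 : u ^ 2 ≤ ((2 * K ^ 2 + 2 * K ^ 3) * t) ^ 2 := by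
      rw [← sq_abs u]
      exact pow_le_pow_left₀ (abs_nonneg u) h1 2
    calc u ^ 2 ≤ ((2 * K ^ 2 + 2 * K ^ 3) * t) ^ 2 := h2
      _ = (2 * K ^ 2 + 2 * K ^ 3) ^ 2 * t ^ 2 := by ring
  have hu_upper : u ≤ 2 * (x * a) * t + 2 * K ^ 3 * t ^ 2 := by
    rw [hu_def]
    have : x ^ 2 * b ≤ K ^ 3 := (abs_le.mp hx2b).2
    nlinarith
  have hfinal : u ^ 2 * Real.exp |u|
      ≤ (2 * K ^ 2 + 2 * K ^ 3) ^ 2 * Real.exp (2 * K ^ 2 + 2 * K ^ 3) * t ^ 2 := by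
    calc u ^ 2 * Real.exp |u|
        ≤ ((2 * K ^ 2 + 2 * K ^ 3) ^ 2 * t ^ 2) * Real.exp (2 * K ^ 2 + 2 * K ^ 3) := by
          apply mul_le_mul hu2 hexpmono (Real.exp_pos _).le (by positivity)
      _ = (2 * K ^ 2 + 2 * K ^ 3) ^ 2 * Real.exp (2 * K ^ 2 + 2 * K ^ 3) * t ^ 2 := by ring
  rw [hsq]
  unfold ccst
  calc Real.exp u ≤ 1 + u + u ^ 2 * Real.exp |u| := hquad
    _ ≤ 1 + (2 * (x * a) * t + 2 * K ^ 3 * t ^ 2)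
        + (2 * K ^ 2 + 2 * K ^ 3) ^ 2 * Real.exp (2 * K ^ 2 + 2 * K ^ 3) * t ^ 2 := by
        linarith
    _ = 1 + 2 * t * (x * a)
        + (2 * K ^ 3 + (2 * K ^ 2 + 2 * K ^ 3) ^ 2 * Real.exp (2 * K ^ 2 + 2 * K ^ 3)) * t ^ 2 := by
        ring

/-- Main inductive bound. -/
lemma main_bound {Ω : Type} {mΩ : MeasurableSpace Ω} {μ : Measure Ω} [IsProbabilityMeasure μ]
    {K α : ℝ} (hK : 0 < K) (hα0 : 0 < α)
    (X A B : ℕ → Ω → ℝ)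
    (hXm : ∀ j, Measurable (X j)) (hAm : ∀ j, Measurable (A j)) (hBm : ∀ j, Measurable (B j))
    (hindep : iIndepFun X μ)
    (hXK : ∀ j ω, |X j ω| ≤ K)
    (hX0 : ∀ j, ∫ ω, X j ω ∂μ = 0)
    (hAK : ∀ j ω, |A j ω| ≤ K) (hBK : ∀ j ω, |B j ω| ≤ K)
    (hAmeas : ∀ j, Measurable[⨆ i ∈ Finset.range j, MeasurableSpace.comap (X i) inferInstance] (A j))
    (hBmeas : ∀ j, Measurable[⨆ i ∈ Finset.range j, MeasurableSpace.comap (X i) inferInstance] (B j))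
    (m : ℕ) :
    ∫ ω, (∏ j ∈ Finset.Icc 1 m,
        Real.exp (X j ω * A j ω / (j : ℝ) ^ α + (X j ω) ^ 2 * B j ω / (j : ℝ) ^ (2 * α))) ^ 2 ∂μ
      ≤ Real.exp (ccst K * ∑ j ∈ Finset.Icc 1 m, (j : ℝ) ^ (-(2 * α))) := by
  -- measurability of each factor
  have hemeas : ∀ j : ℕ, Measurable fun ω =>
      Real.exp (X j ω * A j ω / (j : ℝ) ^ α + (X j ω) ^ 2 * B j ω / (j : ℝ) ^ (2 * α)) := by
    intro j
    exact ((((hXm j).mul (hAm j)).div_const _).add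
      ((((hXm j).pow measurable_const).mul (hBm j)).div_const _)).exp
  -- pointwise bound on each factor
  have hfac : ∀ (j : ℕ), 1 ≤ j → ∀ ω,
      Real.exp (X j ω * A j ω / (j : ℝ) ^ α + (X j ω) ^ 2 * B j ω / (j : ℝ) ^ (2 * α))
        ≤ Real.exp (K ^ 2 + K ^ 3) := by
    intro j hj ω
    have hj1 : (1 : ℝ) ≤ (j : ℝ) := by exact_mod_cast hj
    have h1 : (1 : ℝ) ≤ (j : ℝ) ^ α := Real.one_le_rpow hj1 hα0.le
    have h2 : (1 : ℝ) ≤ (j : ℝ) ^ (2 * α) := Real.one_le_rpow hj1 (by linarith)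
    have hxa : |X j ω * A j ω| ≤ K ^ 2 := by
      rw [abs_mul]
      calc |X j ω| * |A j ω| ≤ K * K :=
            mul_le_mul (hXK j ω) (hAK j ω) (abs_nonneg _) hK.le
        _ = K ^ 2 := by ring
    have hx2b : |(X j ω) ^ 2 * B j ω| ≤ K ^ 3 := by
      rw [abs_mul, abs_pow]
      calc |X j ω| ^ 2 * |B j ω| ≤ K ^ 2 * K := by
            apply mul_le_mul _ (hBK j ω) (abs_nonneg _) (by positivity)
            exact pow_le_pow_left₀ (abs_nonneg _) (hXK j ω) 2
        _ = K ^ 3 := by ring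
    apply Real.exp_le_exp.mpr
    have t1 : X j ω * A j ω / (j : ℝ) ^ α ≤ K ^ 2 := by
      calc X j ω * A j ω / (j : ℝ) ^ α ≤ |X j ω * A j ω| / (j : ℝ) ^ α :=
            (div_le_div_iff_of_pos_right (by linarith)).mpr (le_abs_self _)
        _ ≤ |X j ω * A j ω| := div_le_self (abs_nonneg _) h1
        _ ≤ K ^ 2 := hxa
    have t2 : (X j ω) ^ 2 * B j ω / (j : ℝ) ^ (2 * α) ≤ K ^ 3 := by
      calc (X j ω) ^ 2 * B j ω / (j : ℝ) ^ (2 * α)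
          ≤ |(X j ω) ^ 2 * B j ω| / (j : ℝ) ^ (2 * α) :=
            (div_le_div_iff_of_pos_right (by linarith)).mpr (le_abs_self _)
        _ ≤ |(X j ω) ^ 2 * B j ω| := div_le_self (abs_nonneg _) h2
        _ ≤ K ^ 3 := hx2b
    linarith
  -- bound on partial products
  have hprodnn : ∀ (m : ℕ) (ω : Ω), 0 ≤ ∏ j ∈ Finset.Icc 1 m,
      Real.exp (X j ω * A j ω / (j : ℝ) ^ α + (X j ω) ^ 2 * B j ω / (j : ℝ) ^ (2 * α)) :=
    fun m ω => Finset.prod_nonneg fun j _ => (Real.exp_pos _).le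
  have hprodbd : ∀ (m : ℕ) (ω : Ω),
      (∏ j ∈ Finset.Icc 1 m,
        Real.exp (X j ω * A j ω / (j : ℝ) ^ α + (X j ω) ^ 2 * B j ω / (j : ℝ) ^ (2 * α)))
        ≤ Real.exp (K ^ 2 + K ^ 3) ^ m := by
    intro m ω
    calc (∏ j ∈ Finset.Icc 1 m,
          Real.exp (X j ω * A j ω / (j : ℝ) ^ α + (X j ω) ^ 2 * B j ω / (j : ℝ) ^ (2 * α)))
        ≤ ∏ _j ∈ Finset.Icc 1 m, Real.exp (K ^ 2 + K ^ 3) :=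
          Finset.prod_le_prod (fun j _ => (Real.exp_pos _).le)
            (fun j hj => hfac j (Finset.mem_Icc.mp hj).1 ω)
      _ = Real.exp (K ^ 2 + K ^ 3) ^ m := by
          rw [Finset.prod_const, Nat.card_Icc]
          norm_num
  induction m with
  | zero =>
    rw [show Finset.Icc 1 0 = (∅ : Finset ℕ) from Finset.Icc_eq_empty (by omega)]
    simp
  | succ m ih =>
    have hmtop : 1 ≤ m + 1 := Nat.le_add_left 1 m
    have hN1 : (1 : ℝ) ≤ ((m + 1 : ℕ) : ℝ) := by exact_mod_cast hmtop
    have hN0 : (0 : ℝ) < ((m + 1 : ℕ) : ℝ) := lt_of_lt_of_le one_pos hN1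
    have ht0 : 0 < ((m + 1 : ℕ) : ℝ) ^ (-α) := Real.rpow_pos_of_pos hN0 _
    have ht1 : ((m + 1 : ℕ) : ℝ) ^ (-α) ≤ 1 :=
      Real.rpow_le_one_of_one_le_of_nonpos hN1 (by linarith)
    have ht2 : (((m + 1 : ℕ) : ℝ) ^ (-α)) ^ 2 = ((m + 1 : ℕ) : ℝ) ^ (-(2 * α)) := by
      rw [sq, ← Real.rpow_add hN0]; ring_nf
    -- integrability helper
    have hIbd : ∀ (f : Ω → ℝ), Measurable f → ∀ c : ℝ, (∀ ω, |f ω| ≤ c) → Integrable f μ := by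
      intro f hf c hc
      exact (integrable_const c).mono' hf.aestronglyMeasurable
        (Filter.Eventually.of_forall fun ω => by simpa [Real.norm_eq_abs] using hc ω)
    -- measurability of the partial product squared
    have hPmeas : Measurable (fun ω => (∏ j ∈ Finset.Icc 1 m,
        Real.exp (X j ω * A j ω / (j : ℝ) ^ α + (X j ω) ^ 2 * B j ω / (j : ℝ) ^ (2 * α))) ^ 2) :=
      (Finset.measurable_prod _ fun j _ => hemeas j).pow measurable_const
    have hPnn : ∀ ω, 0 ≤ (∏ j ∈ Finset.Icc 1 m,
        Real.exp (X j ω * A j ω / (j : ℝ) ^ α + (X j ω) ^ 2 * B j ω / (j : ℝ) ^ (2 * α))) ^ 2 :=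
      fun ω => sq_nonneg _
    have hPbd : ∀ ω, |(∏ j ∈ Finset.Icc 1 m,
        Real.exp (X j ω * A j ω / (j : ℝ) ^ α + (X j ω) ^ 2 * B j ω / (j : ℝ) ^ (2 * α))) ^ 2|
          ≤ (Real.exp (K ^ 2 + K ^ 3) ^ m) ^ 2 := by
      intro ω
      rw [abs_of_nonneg (hPnn ω)]
      exact pow_le_pow_left₀ (hprodnn m ω) (hprodbd m ω) 2
    have hPint : Integrable (fun ω => (∏ j ∈ Finset.Icc 1 m,
        Real.exp (X j ω * A j ω / (j : ℝ) ^ α + (X j ω) ^ 2 * B j ω / (j : ℝ) ^ (2 * α))) ^ 2) μ :=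
      hIbd _ hPmeas _ hPbd
    -- pointwise bound on the new factor, squared
    have hG : ∀ ω, Real.exp (X (m+1) ω * A (m+1) ω / ((m+1 : ℕ) : ℝ) ^ α
          + (X (m+1) ω) ^ 2 * B (m+1) ω / ((m+1 : ℕ) : ℝ) ^ (2 * α)) ^ 2
        ≤ 1 + 2 * (((m + 1 : ℕ) : ℝ) ^ (-α)) * (X (m+1) ω * A (m+1) ω)
          + ccst K * (((m + 1 : ℕ) : ℝ) ^ (-α)) ^ 2 := by
      intro ω
      have e1 : (((m + 1 : ℕ) : ℝ) ^ α)⁻¹ = ((m + 1 : ℕ) : ℝ) ^ (-α) :=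
        (Real.rpow_neg hN0.le α).symm
      have e2 : (((m + 1 : ℕ) : ℝ) ^ (2 * α))⁻¹ = (((m + 1 : ℕ) : ℝ) ^ (-α)) ^ 2 := by
        rw [ht2, Real.rpow_neg hN0.le]
      have hconv : X (m+1) ω * A (m+1) ω / ((m+1 : ℕ) : ℝ) ^ α
            + (X (m+1) ω) ^ 2 * B (m+1) ω / ((m+1 : ℕ) : ℝ) ^ (2 * α)
          = X (m+1) ω * A (m+1) ω * (((m + 1 : ℕ) : ℝ) ^ (-α))
            + (X (m+1) ω) ^ 2 * B (m+1) ω * (((m + 1 : ℕ) : ℝ) ^ (-α)) ^ 2 := by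
        rw [div_eq_mul_inv, div_eq_mul_inv, e1, e2]
      rw [hconv]
      exact key_exp hK (hXK _ _) (hAK _ _) (hBK _ _) ht0.le ht1
    -- split the product
    simp_rw [Finset.prod_Icc_succ_top hmtop, mul_pow]
    -- independence of (P * A (m+1)) and X (m+1)
    have hle : ∀ i, MeasurableSpace.comap (X i) inferInstance ≤ mΩ := fun i => (hXm i).comap_le
    have hbig : Indep (⨆ i ∈ Finset.range (m+1), MeasurableSpace.comap (X i) inferInstance)
        (MeasurableSpace.comap (X (m+1)) inferInstance) μ := by
      have h := indep_biSup_compl hle hindep.iIndep {i | i < m + 1}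
      refine indep_of_indep_of_le_right (indep_of_indep_of_le_left h ?_) ?_
      · refine iSup₂_le fun i hi => ?_
        exact le_iSup₂ (f := fun i (_ : i ∈ {i | i < m + 1}) =>
          MeasurableSpace.comap (X i) inferInstance) i (by simpa using hi)
      · exact le_iSup₂ (f := fun i (_ : i ∈ ({i | i < m + 1} : Set ℕ)ᶜ) =>
          MeasurableSpace.comap (X i) inferInstance) (m+1) (by simp)
    have hXG : ∀ j, j < m + 1 →
        Measurable[⨆ i ∈ Finset.range (m+1), MeasurableSpace.comap (X i) inferInstance] (X j) := by
      intro j hj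
      exact (comap_measurable (X j)).mono
        (le_iSup₂ (f := fun i (_ : i ∈ Finset.range (m+1)) =>
          MeasurableSpace.comap (X i) inferInstance) j (Finset.mem_range.mpr hj)) le_rfl
    have hsub : ∀ j, j ≤ m + 1 →
        (⨆ i ∈ Finset.range j, MeasurableSpace.comap (X i) inferInstance)
          ≤ ⨆ i ∈ Finset.range (m+1), MeasurableSpace.comap (X i) inferInstance := by
      intro j hj
      exact biSup_mono fun i hi => Finset.mem_range.mpr
        (lt_of_lt_of_le (Finset.mem_range.mp hi) hj)
    have hAG : ∀ j, j ≤ m + 1 →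
        Measurable[⨆ i ∈ Finset.range (m+1), MeasurableSpace.comap (X i) inferInstance] (A j) :=
      fun j hj => (hAmeas j).mono (hsub j hj) le_rfl
    have hBG : ∀ j, j ≤ m + 1 →
        Measurable[⨆ i ∈ Finset.range (m+1), MeasurableSpace.comap (X i) inferInstance] (B j) :=
      fun j hj => (hBmeas j).mono (hsub j hj) le_rfl
    have hPAmeasG : Measurable[⨆ i ∈ Finset.range (m+1), MeasurableSpace.comap (X i) inferInstance]
        (fun ω => (∏ j ∈ Finset.Icc 1 m,
          Real.exp (X j ω * A j ω / (j : ℝ) ^ α + (X j ω) ^ 2 * B j ω / (j : ℝ) ^ (2 * α))) ^ 2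
          * A (m+1) ω) := by
      refine Measurable.mul ?_ (hAG (m+1) le_rfl)
      refine Measurable.pow ?_ measurable_const
      refine Finset.measurable_prod _ fun j hj => ?_
      have hj' : j < m + 1 := Nat.lt_succ_of_le (Finset.mem_Icc.mp hj).2
      have hj'' : j ≤ m + 1 := hj'.le
      exact ((((hXG j hj').mul (hAG j hj'')).div_const _).add
        ((((hXG j hj').pow measurable_const).mul (hBG j hj'')).div_const _)).exp
    have hPAmeas : Measurable (fun ω => (∏ j ∈ Finset.Icc 1 m,
        Real.exp (X j ω * A j ω / (j : ℝ) ^ α + (X j ω) ^ 2 * B j ω / (j : ℝ) ^ (2 * α))) ^ 2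
        * A (m+1) ω) := hPmeas.mul (hAm (m+1))
    have hPAint : Integrable (fun ω => (∏ j ∈ Finset.Icc 1 m,
        Real.exp (X j ω * A j ω / (j : ℝ) ^ α + (X j ω) ^ 2 * B j ω / (j : ℝ) ^ (2 * α))) ^ 2
        * A (m+1) ω) μ := by
      refine hIbd _ hPAmeas ((Real.exp (K ^ 2 + K ^ 3) ^ m) ^ 2 * K) fun ω => ?_
      rw [abs_mul]
      exact mul_le_mul (hPbd ω) (hAK _ _) (abs_nonneg _)
        (by positivity)
    have hXint : Integrable (X (m+1)) μ := hIbd _ (hXm (m+1)) K (fun ω => hXK _ _)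
    have hIF : IndepFun (fun ω => (∏ j ∈ Finset.Icc 1 m,
        Real.exp (X j ω * A j ω / (j : ℝ) ^ α + (X j ω) ^ 2 * B j ω / (j : ℝ) ^ (2 * α))) ^ 2
        * A (m+1) ω) (X (m+1)) μ :=
      (IndepFun_iff_Indep _ _ μ).mpr (indep_of_indep_of_le_left hbig hPAmeasG.comap_le)
    have hcross : ∫ ω, ((∏ j ∈ Finset.Icc 1 m,
        Real.exp (X j ω * A j ω / (j : ℝ) ^ α + (X j ω) ^ 2 * B j ω / (j : ℝ) ^ (2 * α))) ^ 2
        * A (m+1) ω) * X (m+1) ω ∂μ = 0 := by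
      have heq : (fun ω => ((∏ j ∈ Finset.Icc 1 m,
          Real.exp (X j ω * A j ω / (j : ℝ) ^ α + (X j ω) ^ 2 * B j ω / (j : ℝ) ^ (2 * α))) ^ 2
          * A (m+1) ω) * X (m+1) ω)
          = (fun ω => (∏ j ∈ Finset.Icc 1 m,
          Real.exp (X j ω * A j ω / (j : ℝ) ^ α + (X j ω) ^ 2 * B j ω / (j : ℝ) ^ (2 * α))) ^ 2
          * A (m+1) ω) * X (m+1) := rfl
      rw [heq, IndepFun.integral_mul_eq_mul_integral hIF hPAint.aestronglyMeasurable hXint.aestronglyMeasurable, hX0 (m+1), mul_zero]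
    -- integrability of P * G
    have hGbd : ∀ ω, |Real.exp (X (m+1) ω * A (m+1) ω / ((m+1 : ℕ) : ℝ) ^ α
        + (X (m+1) ω) ^ 2 * B (m+1) ω / ((m+1 : ℕ) : ℝ) ^ (2 * α)) ^ 2|
          ≤ Real.exp (K ^ 2 + K ^ 3) ^ 2 := by
      intro ω
      rw [abs_of_nonneg (sq_nonneg _)]
      exact pow_le_pow_left₀ (Real.exp_pos _).le (hfac (m+1) hmtop ω) 2
    have hPGint : Integrable (fun ω => (∏ j ∈ Finset.Icc 1 m,
        Real.exp (X j ω * A j ω / (j : ℝ) ^ α + (X j ω) ^ 2 * B j ω / (j : ℝ) ^ (2 * α))) ^ 2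
        * Real.exp (X (m+1) ω * A (m+1) ω / ((m+1 : ℕ) : ℝ) ^ α
        + (X (m+1) ω) ^ 2 * B (m+1) ω / ((m+1 : ℕ) : ℝ) ^ (2 * α)) ^ 2) μ := by
      refine hIbd _ (hPmeas.mul ((hemeas (m+1)).pow measurable_const))
        ((Real.exp (K ^ 2 + K ^ 3) ^ m) ^ 2 * Real.exp (K ^ 2 + K ^ 3) ^ 2) fun ω => ?_
      rw [abs_mul]
      exact mul_le_mul (hPbd ω) (hGbd ω) (abs_nonneg _) (by positivity)
    have hPAXint : Integrable (fun ω => ((∏ j ∈ Finset.Icc 1 m,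
        Real.exp (X j ω * A j ω / (j : ℝ) ^ α + (X j ω) ^ 2 * B j ω / (j : ℝ) ^ (2 * α))) ^ 2
        * A (m+1) ω) * X (m+1) ω) μ := by
      refine hIbd _ (hPAmeas.mul (hXm (m+1))) (((Real.exp (K ^ 2 + K ^ 3) ^ m) ^ 2 * K) * K)
        fun ω => ?_
      rw [abs_mul, abs_mul]
      refine mul_le_mul (mul_le_mul (hPbd ω) (hAK _ _) (abs_nonneg _) (by positivity))
        (hXK _ _) (abs_nonneg _) (by positivity)
    -- main integral inequality
    have hmono : ∫ ω, (∏ j ∈ Finset.Icc 1 m,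
          Real.exp (X j ω * A j ω / (j : ℝ) ^ α + (X j ω) ^ 2 * B j ω / (j : ℝ) ^ (2 * α))) ^ 2
          * Real.exp (X (m+1) ω * A (m+1) ω / ((m+1 : ℕ) : ℝ) ^ α
          + (X (m+1) ω) ^ 2 * B (m+1) ω / ((m+1 : ℕ) : ℝ) ^ (2 * α)) ^ 2 ∂μ
        ≤ ∫ ω, ((∏ j ∈ Finset.Icc 1 m,
          Real.exp (X j ω * A j ω / (j : ℝ) ^ α + (X j ω) ^ 2 * B j ω / (j : ℝ) ^ (2 * α))) ^ 2
          + 2 * (((m + 1 : ℕ) : ℝ) ^ (-α)) * (((∏ j ∈ Finset.Icc 1 m,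
            Real.exp (X j ω * A j ω / (j : ℝ) ^ α + (X j ω) ^ 2 * B j ω / (j : ℝ) ^ (2 * α))) ^ 2
            * A (m+1) ω) * X (m+1) ω)
          + (ccst K * (((m + 1 : ℕ) : ℝ) ^ (-α)) ^ 2) * (∏ j ∈ Finset.Icc 1 m,
            Real.exp (X j ω * A j ω / (j : ℝ) ^ α + (X j ω) ^ 2 * B j ω / (j : ℝ) ^ (2 * α))) ^ 2) ∂μ := by
      refine integral_mono hPGint ((hPint.add (hPAXint.const_mul _)).add (hPint.const_mul _))
        fun ω => ?_
      have h := mul_le_mul_of_nonneg_left (hG ω) (hPnn ω)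
      calc (∏ j ∈ Finset.Icc 1 m,
            Real.exp (X j ω * A j ω / (j : ℝ) ^ α + (X j ω) ^ 2 * B j ω / (j : ℝ) ^ (2 * α))) ^ 2
            * Real.exp (X (m+1) ω * A (m+1) ω / ((m+1 : ℕ) : ℝ) ^ α
            + (X (m+1) ω) ^ 2 * B (m+1) ω / ((m+1 : ℕ) : ℝ) ^ (2 * α)) ^ 2
          ≤ (∏ j ∈ Finset.Icc 1 m,
            Real.exp (X j ω * A j ω / (j : ℝ) ^ α + (X j ω) ^ 2 * B j ω / (j : ℝ) ^ (2 * α))) ^ 2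
            * (1 + 2 * (((m + 1 : ℕ) : ℝ) ^ (-α)) * (X (m+1) ω * A (m+1) ω)
              + ccst K * (((m + 1 : ℕ) : ℝ) ^ (-α)) ^ 2) := h
        _ = (∏ j ∈ Finset.Icc 1 m,
            Real.exp (X j ω * A j ω / (j : ℝ) ^ α + (X j ω) ^ 2 * B j ω / (j : ℝ) ^ (2 * α))) ^ 2
          + 2 * (((m + 1 : ℕ) : ℝ) ^ (-α)) * (((∏ j ∈ Finset.Icc 1 m,
            Real.exp (X j ω * A j ω / (j : ℝ) ^ α + (X j ω) ^ 2 * B j ω / (j : ℝ) ^ (2 * α))) ^ 2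
            * A (m+1) ω) * X (m+1) ω)
          + (ccst K * (((m + 1 : ℕ) : ℝ) ^ (-α)) ^ 2) * (∏ j ∈ Finset.Icc 1 m,
            Real.exp (X j ω * A j ω / (j : ℝ) ^ α + (X j ω) ^ 2 * B j ω / (j : ℝ) ^ (2 * α))) ^ 2 := by
            ring
    have hsum : ∫ ω, ((∏ j ∈ Finset.Icc 1 m,
          Real.exp (X j ω * A j ω / (j : ℝ) ^ α + (X j ω) ^ 2 * B j ω / (j : ℝ) ^ (2 * α))) ^ 2
          + 2 * (((m + 1 : ℕ) : ℝ) ^ (-α)) * (((∏ j ∈ Finset.Icc 1 m,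
            Real.exp (X j ω * A j ω / (j : ℝ) ^ α + (X j ω) ^ 2 * B j ω / (j : ℝ) ^ (2 * α))) ^ 2
            * A (m+1) ω) * X (m+1) ω)
          + (ccst K * (((m + 1 : ℕ) : ℝ) ^ (-α)) ^ 2) * (∏ j ∈ Finset.Icc 1 m,
            Real.exp (X j ω * A j ω / (j : ℝ) ^ α + (X j ω) ^ 2 * B j ω / (j : ℝ) ^ (2 * α))) ^ 2) ∂μ
        = (1 + ccst K * (((m + 1 : ℕ) : ℝ) ^ (-α)) ^ 2) * ∫ ω, (∏ j ∈ Finset.Icc 1 m,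
            Real.exp (X j ω * A j ω / (j : ℝ) ^ α + (X j ω) ^ 2 * B j ω / (j : ℝ) ^ (2 * α))) ^ 2 ∂μ := by
      have i2 : Integrable (fun ω => 2 * (((m + 1 : ℕ) : ℝ) ^ (-α)) * (((∏ j ∈ Finset.Icc 1 m,
          Real.exp (X j ω * A j ω / (j : ℝ) ^ α + (X j ω) ^ 2 * B j ω / (j : ℝ) ^ (2 * α))) ^ 2
          * A (m+1) ω) * X (m+1) ω)) μ := hPAXint.const_mul _
      have i3 : Integrable (fun ω => (ccst K * (((m + 1 : ℕ) : ℝ) ^ (-α)) ^ 2)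
          * (∏ j ∈ Finset.Icc 1 m,
          Real.exp (X j ω * A j ω / (j : ℝ) ^ α + (X j ω) ^ 2 * B j ω / (j : ℝ) ^ (2 * α))) ^ 2) μ :=
        hPint.const_mul _
      have i12 : Integrable (fun ω => (∏ j ∈ Finset.Icc 1 m,
          Real.exp (X j ω * A j ω / (j : ℝ) ^ α + (X j ω) ^ 2 * B j ω / (j : ℝ) ^ (2 * α))) ^ 2
          + 2 * (((m + 1 : ℕ) : ℝ) ^ (-α)) * (((∏ j ∈ Finset.Icc 1 m,
            Real.exp (X j ω * A j ω / (j : ℝ) ^ α + (X j ω) ^ 2 * B j ω / (j : ℝ) ^ (2 * α))) ^ 2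
            * A (m+1) ω) * X (m+1) ω)) μ := hPint.add i2
      rw [integral_add i12 i3, integral_add hPint i2, integral_const_mul, integral_const_mul, hcross,
        mul_zero]
      ring
    have hPint_nn : 0 ≤ ∫ ω, (∏ j ∈ Finset.Icc 1 m,
        Real.exp (X j ω * A j ω / (j : ℝ) ^ α + (X j ω) ^ 2 * B j ω / (j : ℝ) ^ (2 * α))) ^ 2 ∂μ :=
      integral_nonneg fun ω => hPnn ω
    have hexp1 : (1 : ℝ) + ccst K * (((m + 1 : ℕ) : ℝ) ^ (-α)) ^ 2
        ≤ Real.exp (ccst K * (((m + 1 : ℕ) : ℝ) ^ (-α)) ^ 2) := by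
      linarith [Real.add_one_le_exp (ccst K * (((m + 1 : ℕ) : ℝ) ^ (-α)) ^ 2)]
    calc ∫ ω, (∏ j ∈ Finset.Icc 1 m,
          Real.exp (X j ω * A j ω / (j : ℝ) ^ α + (X j ω) ^ 2 * B j ω / (j : ℝ) ^ (2 * α))) ^ 2
          * Real.exp (X (m+1) ω * A (m+1) ω / ((m+1 : ℕ) : ℝ) ^ α
          + (X (m+1) ω) ^ 2 * B (m+1) ω / ((m+1 : ℕ) : ℝ) ^ (2 * α)) ^ 2 ∂μ
        ≤ (1 + ccst K * (((m + 1 : ℕ) : ℝ) ^ (-α)) ^ 2) * ∫ ω, (∏ j ∈ Finset.Icc 1 m,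
            Real.exp (X j ω * A j ω / (j : ℝ) ^ α + (X j ω) ^ 2 * B j ω / (j : ℝ) ^ (2 * α))) ^ 2 ∂μ := by
          rw [← hsum]; exact hmono
      _ ≤ Real.exp (ccst K * (((m + 1 : ℕ) : ℝ) ^ (-α)) ^ 2) * ∫ ω, (∏ j ∈ Finset.Icc 1 m,
            Real.exp (X j ω * A j ω / (j : ℝ) ^ α + (X j ω) ^ 2 * B j ω / (j : ℝ) ^ (2 * α))) ^ 2 ∂μ :=
          mul_le_mul_of_nonneg_right hexp1 hPint_nn
      _ ≤ Real.exp (ccst K * (((m + 1 : ℕ) : ℝ) ^ (-α)) ^ 2)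
            * Real.exp (ccst K * ∑ j ∈ Finset.Icc 1 m, (j : ℝ) ^ (-(2 * α))) :=
          mul_le_mul_of_nonneg_left ih (Real.exp_pos _).le
      _ = Real.exp (ccst K * ∑ j ∈ Finset.Icc 1 (m+1), (j : ℝ) ^ (-(2 * α))) := by
          rw [← Real.exp_add, Finset.sum_Icc_succ_top hmtop, ht2]
          ring_nf

/-- Second-moment bound `E[R_n²] ≤ exp(C n^{1-2α})` for the product
`R_n = ∏_{j=1}^n exp(X_j A_j / j^α + X_j² B_j / j^{2α})`, where the `X_j` are independent,
centered, of unit variance and bounded by `K`, and `A_j, B_j` are bounded by `K` and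
measurable with respect to the σ-algebra generated by `X_1, …, X_{j-1}` (hence independent
of `X_j`). The constant `C` depends only on `K` and `α`. -/
theorem stmt_6 (K α : ℝ) (hK : 0 < K) (hα0 : 0 < α) (hα : α < 1 / 2) :
    ∃ C > 0, ∀ (Ω : Type) (mΩ : MeasurableSpace Ω) (μ : Measure Ω),
      IsProbabilityMeasure μ →
      ∀ X A B : ℕ → Ω → ℝ,
      (∀ j, Measurable (X j)) → (∀ j, Measurable (A j)) → (∀ j, Measurable (B j)) →
      iIndepFun X μ →
      (∀ j ω, |X j ω| ≤ K) →
      (∀ j, ∫ ω, X j ω ∂μ = 0) →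
      (∀ j, ∫ ω, (X j ω) ^ 2 ∂μ = 1) →
      (∀ j ω, |A j ω| ≤ K) → (∀ j ω, |B j ω| ≤ K) →
      (∀ j, Measurable[⨆ i ∈ Finset.range j, MeasurableSpace.comap (X i) inferInstance] (A j)) →
      (∀ j, Measurable[⨆ i ∈ Finset.range j, MeasurableSpace.comap (X i) inferInstance] (B j)) →
      ∀ n : ℕ, 1 ≤ n →
        ∫ ω, (∏ j ∈ Finset.Icc 1 n,
            Real.exp (X j ω * A j ω / (j : ℝ) ^ α + (X j ω) ^ 2 * B j ω / (j : ℝ) ^ (2 * α))) ^ 2 ∂μ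
          ≤ Real.exp (C * (n : ℝ) ^ (1 - 2 * α)) := by
  have hp0 : (0:ℝ) < 1 - 2 * α := by linarith
  refine ⟨ccst K / (1 - 2 * α), div_pos (ccst_pos hK) hp0, ?_⟩
  intro Ω mΩ μ hμ X A B hXm hAm hBm hindep hXK hX0 hX2 hAK hBK hAmeas hBmeas n hn
  haveI := hμ
  have h1 := main_bound hK hα0 X A B hXm hAm hBm hindep hXK hX0 hAK hBK hAmeas hBmeas n
  refine h1.trans ?_
  apply Real.exp_le_exp.mpr
  have hsum : ∑ j ∈ Finset.Icc 1 n, (j:ℝ) ^ (-(2*α)) ≤ (1/(1-2*α)) * (n:ℝ) ^ (1-2*α) := by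
    have h2 := sum_rpow_le hp0 (by linarith) n
    simp only [show ((1 - 2*α) - 1) = (-(2*α)) from by ring] at h2
    exact h2
  calc ccst K * ∑ j ∈ Finset.Icc 1 n, (j:ℝ) ^ (-(2*α))
      ≤ ccst K * ((1/(1-2*α)) * (n:ℝ) ^ (1-2*α)) :=
        mul_le_mul_of_nonneg_left hsum (ccst_pos hK).le
    _ = ccst K / (1-2*α) * (n:ℝ) ^ (1-2*α) := by ring
end

section
/- Let (T_j)_{j≥1} be independent random 2×2 real matrices with ‖T_j‖, ‖T_j^{-1}‖ ≤ M deterministically, and suppose there exist n₀ ≥ 1, c₄ > 0 and s > 0 such that for every l ≥ 1 and every unit vector ψ, E[‖T_{l n₀} ⋯ T_{(l-1)n₀+1} ψ‖^{-s} | 𝓕_{l-1}] ≤ 1 - c₄ l^{-2α} almost surely, where 𝓕_{l-1} = σ(T_1, …, T_{(l-1)n₀}) and 0 < α < 1/2. Then for all integers 0 ≤ m < n and every unit vector ψ₀, E[‖T_n ⋯ T_m ψ₀‖^{-s}] ≤ C exp(c m^{1-2α} - c n^{1-2α}) for constants C < ∞ and c > 0 depending only on M, n₀, c₄, α. -/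
open MeasureTheory ProbabilityTheory ContinuousLinearMap

noncomputable instance : MeasurableSpace
    (EuclideanSpace ℝ (Fin 2) →L[ℝ] EuclideanSpace ℝ (Fin 2)) := borel _

instance : BorelSpace
    (EuclideanSpace ℝ (Fin 2) →L[ℝ] EuclideanSpace ℝ (Fin 2)) := ⟨rfl⟩

/-- The product `T_{l n₀} ⋯ T_{(l-1)n₀+1}` of a block of `n₀` consecutive transfer matrices,
applied as an operator (the list `[T_{ln₀}, T_{ln₀-1}, …]` multiplied in order). -/
noncomputable def blockProd {Ω : Type}
    (T : ℕ → Ω → (EuclideanSpace ℝ (Fin 2) →L[ℝ] EuclideanSpace ℝ (Fin 2)))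
    (ω : Ω) (len top : ℕ) : EuclideanSpace ℝ (Fin 2) →L[ℝ] EuclideanSpace ℝ (Fin 2) :=
  ((List.range len).map fun i => T (top - i) ω).prod

namespace Stmt15Aux

abbrev E2 := EuclideanSpace ℝ (Fin 2)

/-- σ-algebra generated by `T_0, …, T_{N-1}`. -/
noncomputable abbrev pastSA {Ω : Type} (T : ℕ → Ω → (E2 →L[ℝ] E2)) (N : ℕ) : MeasurableSpace Ω :=
  ⨆ j ∈ Set.Iio N, MeasurableSpace.comap (T j) inferInstance

/-- σ-algebra generated by `T_j`, `lo < j ≤ hi`. -/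
noncomputable abbrev blockSA {Ω : Type} (T : ℕ → Ω → (E2 →L[ℝ] E2)) (lo hi : ℕ) : MeasurableSpace Ω :=
  ⨆ j ∈ Set.Ioc lo hi, MeasurableSpace.comap (T j) inferInstance

variable {Ω : Type}

lemma blockProd_succ (T : ℕ → Ω → (E2 →L[ℝ] E2)) (ω : Ω) (len top : ℕ) :
    blockProd T ω (len + 1) top = T top ω * blockProd T ω len (top - 1) := by
  unfold blockProd
  rw [List.range_succ_eq_map, List.map_cons, List.prod_cons, Nat.sub_zero, List.map_map]
  have h : ((fun i => T (top - i) ω) ∘ Nat.succ) = fun i => T (top - 1 - i) ω := by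
    funext i
    have hi : top - Nat.succ i = top - 1 - i := by omega
    simp only [Function.comp_apply, hi]
  rw [h]

lemma blockProd_add (T : ℕ → Ω → (E2 →L[ℝ] E2)) (ω : Ω) (m₁ m₂ top : ℕ) :
    blockProd T ω (m₁ + m₂) top = blockProd T ω m₁ top * blockProd T ω m₂ (top - m₁) := by
  unfold blockProd
  rw [List.range_add, List.map_append, List.prod_append]
  congr 1
  rw [List.map_map]
  have h : ((fun i => T (top - i) ω) ∘ fun x => m₁ + x) = fun i => T (top - m₁ - i) ω := by
    funext i
    have hi : top - (m₁ + i) = top - m₁ - i := by omega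
    simp only [Function.comp_apply, hi]
  rw [h]

lemma blockProd_norm_le {M : ℝ} (T : ℕ → Ω → (E2 →L[ℝ] E2))
    (hTM : ∀ j ω, ‖T j ω‖ ≤ M) (hM : 1 ≤ M) (ω : Ω) (len : ℕ) :
    ∀ (top : ℕ) (v : E2), ‖blockProd T ω len top v‖ ≤ M ^ len * ‖v‖ := by
  induction len with
  | zero => intro top v; simp [blockProd]
  | succ k ih =>
    intro top v
    rw [blockProd_succ, ContinuousLinearMap.mul_apply]
    calc ‖T top ω (blockProd T ω k (top - 1) v)‖
        ≤ ‖T top ω‖ * ‖blockProd T ω k (top - 1) v‖ := (T top ω).le_opNorm _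
      _ ≤ M * (M ^ k * ‖v‖) := by
          apply mul_le_mul (hTM top ω) (ih (top - 1) v) (norm_nonneg _) (by linarith)
      _ = M ^ (k + 1) * ‖v‖ := by ring

lemma blockProd_norm_ge {M : ℝ} (T : ℕ → Ω → (E2 →L[ℝ] E2)) (hM : 1 ≤ M)
    (hlow : ∀ j ω (v : E2), ‖v‖ ≤ M * ‖T j ω v‖) (ω : Ω) (len : ℕ) :
    ∀ (top : ℕ) (v : E2), ‖v‖ ≤ M ^ len * ‖blockProd T ω len top v‖ := by
  induction len with
  | zero => intro top v; simp [blockProd]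
  | succ k ih =>
    intro top v
    rw [blockProd_succ, ContinuousLinearMap.mul_apply]
    have hMk : (0:ℝ) ≤ M ^ k := by positivity
    calc ‖v‖ ≤ M ^ k * ‖blockProd T ω k (top - 1) v‖ := ih (top - 1) v
      _ ≤ M ^ k * (M * ‖T top ω (blockProd T ω k (top - 1) v)‖) :=
          mul_le_mul_of_nonneg_left (hlow top ω _) hMk
      _ = M ^ (k + 1) * ‖T top ω (blockProd T ω k (top - 1) v)‖ := by ring

lemma blockProd_measurable (T : ℕ → Ω → (E2 →L[ℝ] E2)) (m' : MeasurableSpace Ω) (len : ℕ) :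
    ∀ top : ℕ, (∀ i, i < len → Measurable[m'] (T (top - i))) →
    Measurable[m'] (fun ω => blockProd T ω len top) := by
  induction len with
  | zero =>
    intro top _
    simp only [blockProd, List.range_zero, List.map_nil, List.prod_nil]
    exact measurable_const
  | succ k ih =>
    intro top h
    simp only [blockProd_succ]
    have h0 : Measurable[m'] (T top) := by simpa using h 0 (Nat.succ_pos k)
    refine h0.mul (ih (top - 1) (fun i hi => ?_))
    have : top - 1 - i = top - (i + 1) := by omega
    rw [this]
    exact h (i + 1) (by omega)

/-- Lipschitz-type bound for `x ↦ x ^ p` on `[b, ∞)`, `b > 0`, `p ≤ 1`. -/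
lemma abs_rpow_sub_rpow_le {p b x y : ℝ} (hb : 0 < b) (hp1 : p ≤ 1)
    (hx : b ≤ x) (hy : b ≤ y) :
    |x ^ p - y ^ p| ≤ |p| * b ^ (p - 1) * |x - y| := by
  have key : ∀ t ∈ Set.Ici b, HasDerivWithinAt (fun u : ℝ => u ^ p)
      (p * t ^ (p - 1)) (Set.Ici b) t := by
    intro t ht
    have htpos : 0 < t := lt_of_lt_of_le hb ht
    exact (Real.hasDerivAt_rpow_const (Or.inl htpos.ne')).hasDerivWithinAt
  have bound : ∀ t ∈ Set.Ici b, ‖p * t ^ (p - 1)‖ ≤ |p| * b ^ (p - 1) := by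
    intro t ht
    have htpos : 0 < t := lt_of_lt_of_le hb ht
    rw [norm_mul, Real.norm_eq_abs, Real.norm_eq_abs,
      abs_of_nonneg (Real.rpow_nonneg htpos.le _)]
    exact mul_le_mul_of_nonneg_left
      (Real.rpow_le_rpow_of_nonpos hb ht (by linarith)) (abs_nonneg p)
  have h := (convex_Ici b).norm_image_sub_le_of_norm_hasDerivWithin_le key bound hy hx
  simpa [Real.norm_eq_abs] using h

/-- Subadditivity of `x ↦ x ^ p` for `0 ≤ p ≤ 1`. -/
lemma rpow_add_le_add_rpow' {a b p : ℝ} (ha : 0 ≤ a) (hb : 0 ≤ b)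
    (h0 : 0 ≤ p) (h1 : p ≤ 1) : (a + b) ^ p ≤ a ^ p + b ^ p := by
  have := NNReal.rpow_add_le_add_rpow a.toNNReal b.toNNReal h0 h1
  have h := NNReal.coe_le_coe.2 this
  push_cast [NNReal.coe_rpow] at h
  rwa [Real.coe_toNNReal a ha, Real.coe_toNNReal b hb] at h

lemma telescope_sum (g : ℕ → ℝ) :
    ∀ v w : ℕ, w ≤ v + 1 →
      (∑ l ∈ Finset.Icc w v, (g (l + 1) - g l)) = g (v + 1) - g w := by
  intro v
  induction v with
  | zero =>
    intro w hw
    rcases Nat.le_one_iff_eq_zero_or_eq_one.mp hw with rfl | rfl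
    · simp
    · rw [Finset.Icc_eq_empty (by omega)]; simp
  | succ v ih =>
    intro w hw
    rcases Nat.lt_or_ge (v + 1) w with hlt | hle
    · have : w = v + 2 := by omega
      subst this
      rw [Finset.Icc_eq_empty (by omega)]; simp
    · rw [Finset.sum_Icc_succ_top (by omega), ih w (by omega)]
      ring

end Stmt15Aux

open Stmt15Aux

section MainLemmas

variable {Ω : Type} [MeasurableSpace Ω]

/-- Unconditional expectation bound for a fixed unit vector, from the conditional one. -/
lemma fixed_block {M c₄ s α : ℝ} {n₀ : ℕ} (μ : Measure Ω) [IsProbabilityMeasure μ]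
    (T : ℕ → Ω → (E2 →L[ℝ] E2)) (hmeas : ∀ j, Measurable (T j))
    (hTM : ∀ j ω, ‖T j ω‖ ≤ M) (hM : 1 ≤ M) (hs : 0 < s)
    (hlow : ∀ j ω (v : E2), ‖v‖ ≤ M * ‖T j ω v‖)
    (hblock : ∀ l : ℕ, 1 ≤ l → ∀ ψ : EuclideanSpace ℝ (Fin 2), ‖ψ‖ = 1 →
      μ[(fun ω => ‖(blockProd T ω n₀ (l * n₀)) ψ‖ ^ (-s)) |
          ⨆ j ∈ Finset.Icc 1 ((l - 1) * n₀), MeasurableSpace.comap (T j) inferInstance]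
        ≤ᵐ[μ] fun _ => 1 - c₄ / (l : ℝ) ^ (2 * α))
    (l : ℕ) (hl : 1 ≤ l) (ψ : E2) (hψ : ‖ψ‖ = 1) :
    ∫ ω, ‖(blockProd T ω n₀ (l * n₀)) ψ‖ ^ (-s) ∂μ ≤ 1 - c₄ / (l : ℝ) ^ (2 * α) := by
  have hm' : (⨆ j ∈ Finset.Icc 1 ((l - 1) * n₀),
      MeasurableSpace.comap (T j) inferInstance) ≤ ‹MeasurableSpace Ω› :=
    iSup₂_le fun j _ => (hmeas j).comap_le
  rw [← integral_condExp hm'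
    (f := fun ω => ‖(blockProd T ω n₀ (l * n₀)) ψ‖ ^ (-s))]
  calc ∫ ω, (μ[(fun ω => ‖(blockProd T ω n₀ (l * n₀)) ψ‖ ^ (-s)) |
        ⨆ j ∈ Finset.Icc 1 ((l - 1) * n₀), MeasurableSpace.comap (T j) inferInstance]) ω ∂μ
      ≤ ∫ _, (1 - c₄ / (l : ℝ) ^ (2 * α)) ∂μ :=
        integral_mono_ae integrable_condExp (integrable_const _) (hblock l hl ψ hψ)
    _ = 1 - c₄ / (l : ℝ) ^ (2 * α) := by simp

end MainLemmas

section CoreLemma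

variable {Ω : Type} [MeasurableSpace Ω]

set_option maxHeartbeats 1000000 in
/-- The core weighted-block estimate: the block acting on a random unit vector measurable
with respect to the past, weighted by a past-measurable nonnegative function. -/
lemma core_block {M c₄ s α : ℝ} {n₀ : ℕ} (μ : Measure Ω) [IsProbabilityMeasure μ]
    (T : ℕ → Ω → (E2 →L[ℝ] E2)) (hmeas : ∀ j, Measurable (T j))
    (hindep : iIndepFun T μ)
    (hTM : ∀ j ω, ‖T j ω‖ ≤ M) (hM : 1 ≤ M) (hs : 0 < s) (hn₀ : 1 ≤ n₀)
    (hlow : ∀ j ω (v : E2), ‖v‖ ≤ M * ‖T j ω v‖)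
    (hblock : ∀ l : ℕ, 1 ≤ l → ∀ ψ : EuclideanSpace ℝ (Fin 2), ‖ψ‖ = 1 →
      μ[(fun ω => ‖(blockProd T ω n₀ (l * n₀)) ψ‖ ^ (-s)) |
          ⨆ j ∈ Finset.Icc 1 ((l - 1) * n₀), MeasurableSpace.comap (T j) inferInstance]
        ≤ᵐ[μ] fun _ => 1 - c₄ / (l : ℝ) ^ (2 * α))
    (l N : ℕ) (hl : 1 ≤ l) (hN : N ≤ (l - 1) * n₀ + 1)
    (ψf : Ω → E2)
    (hψmeas : Measurable[pastSA T N] ψf)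
    (hψ1 : ∀ ω, ‖ψf ω‖ = 1)
    (g : Ω → ENNReal)
    (hg : Measurable[pastSA T N] g)
    (hgtop : ∫⁻ ω, g ω ∂μ ≠ ⊤) :
    ∫⁻ ω, ENNReal.ofReal (‖blockProd T ω n₀ (l * n₀) (ψf ω)‖ ^ (-s)) * g ω ∂μ
      ≤ ENNReal.ofReal (1 - c₄ / (l : ℝ) ^ (2 * α)) * ∫⁻ ω, g ω ∂μ := by
  classical
  have hM0 : (0:ℝ) < M := lt_of_lt_of_le one_pos hM
  -- block arithmetic
  obtain ⟨l', rfl⟩ : ∃ l', l = l' + 1 := ⟨l - 1, by omega⟩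
  have hl'n : (l' + 1 - 1) * n₀ = l' * n₀ := by simp
  rw [hl'n] at hN
  have hmul : (l' + 1) * n₀ = l' * n₀ + n₀ := by ring
  have h𝓕le : pastSA T N ≤ ‹MeasurableSpace Ω› := iSup₂_le fun j _ => (hmeas j).comap_le
  have h𝓑le : blockSA T (l' * n₀) ((l' + 1) * n₀) ≤ ‹MeasurableSpace Ω› :=
    iSup₂_le fun j _ => (hmeas j).comap_le
  have hIndep : Indep (blockSA T (l' * n₀) ((l' + 1) * n₀)) (pastSA T N) μ := by
    refine indep_iSup_of_disjoint (fun j => (hmeas j).comap_le)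
      ((iIndepFun_iff_iIndep _ _ _).mp hindep) ?_
    rw [Set.disjoint_left]
    intro j hj hj'
    simp only [Set.mem_Ioc] at hj
    simp only [Set.mem_Iio] at hj'
    omega
  -- the fixed-vector block functions
  set fE : E2 → Ω → ENNReal :=
    fun ψ ω => ENNReal.ofReal (‖blockProd T ω n₀ ((l' + 1) * n₀) ψ‖ ^ (-s)) with hfEdef
  have hB𝓑 : Measurable[blockSA T (l' * n₀) ((l' + 1) * n₀)]
      (fun ω => blockProd T ω n₀ ((l' + 1) * n₀)) := by
    refine blockProd_measurable T _ n₀ ((l' + 1) * n₀) (fun i hi => ?_)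
    refine measurable_iff_comap_le.mpr ?_
    refine le_iSup₂ (f := fun j (_ : j ∈ Set.Ioc (l' * n₀) ((l' + 1) * n₀)) =>
      MeasurableSpace.comap (T j) inferInstance) ((l' + 1) * n₀ - i) ?_
    simp only [Set.mem_Ioc]
    omega
  have houter : Measurable (fun v : E2 => ENNReal.ofReal (‖v‖ ^ (-s))) :=
    ENNReal.measurable_ofReal.comp (measurable_norm.pow_const _)
  have hfE𝓑 : ∀ ψ : E2, Measurable[blockSA T (l' * n₀) ((l' + 1) * n₀)] (fE ψ) := by
    intro ψ
    have hm1 : Measurable[blockSA T (l' * n₀) ((l' + 1) * n₀)]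
        (fun ω => (blockProd T ω n₀ ((l' + 1) * n₀)) ψ) :=
      (ContinuousLinearMap.apply ℝ E2 ψ).continuous.measurable.comp hB𝓑
    exact houter.comp hm1
  have hfEmeas : ∀ ψ : E2, Measurable (fE ψ) := fun ψ => (hfE𝓑 ψ).mono h𝓑le le_rfl
  have hψmeas' : Measurable ψf := hψmeas.mono h𝓕le le_rfl
  have hBamb : Measurable (fun ω => blockProd T ω n₀ ((l' + 1) * n₀)) :=
    hB𝓑.mono h𝓑le le_rfl
  -- the random-vector integrand
  set F : Ω → ENNReal :=
    fun ω => ENNReal.ofReal (‖blockProd T ω n₀ ((l' + 1) * n₀) (ψf ω)‖ ^ (-s)) with hFdef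
  have hFmeas : Measurable F := by
    have happ : Measurable (fun ω => blockProd T ω n₀ ((l' + 1) * n₀) (ψf ω)) := by
      have hpair : Measurable (fun ω => ((blockProd T ω n₀ ((l' + 1) * n₀) : E2 →L[ℝ] E2), ψf ω)) :=
        hBamb.prodMk hψmeas'
      exact (isBoundedBilinearMap_apply (𝕜 := ℝ) (E := E2) (F := E2)).continuous.measurable.comp hpair
    have hm2 : Measurable (fun ω => ‖blockProd T ω n₀ ((l' + 1) * n₀) (ψf ω)‖ ^ (-s)) :=
      happ.norm.pow_const _
    exact ENNReal.measurable_ofReal.comp hm2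
  have hgamb : Measurable g := hg.mono h𝓕le le_rfl
  -- norm bounds for unit vectors
  have hnormge : ∀ (ψ : E2), ‖ψ‖ = 1 → ∀ ω,
      ((M:ℝ) ^ n₀)⁻¹ ≤ ‖blockProd T ω n₀ ((l' + 1) * n₀) ψ‖ := by
    intro ψ hψ ω
    have h := blockProd_norm_ge T hM hlow ω n₀ ((l' + 1) * n₀) ψ
    rw [hψ] at h
    have hpos : (0:ℝ) < M ^ n₀ := by positivity
    rw [inv_eq_one_div, div_le_iff₀ hpos]
    linarith [h, mul_comm ((M:ℝ) ^ n₀) ‖blockProd T ω n₀ ((l' + 1) * n₀) ψ‖]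
  have hnormle : ∀ (ψ : E2), ‖ψ‖ = 1 → ∀ ω,
      ‖blockProd T ω n₀ ((l' + 1) * n₀) ψ‖ ≤ (M:ℝ) ^ n₀ := by
    intro ψ hψ ω
    have h := blockProd_norm_le T hTM hM ω n₀ ((l' + 1) * n₀) ψ
    rw [hψ, mul_one] at h
    exact h
  -- pointwise upper bound on the rpow
  have hub : ∀ (ψ : E2), ‖ψ‖ = 1 → ∀ ω,
      ‖blockProd T ω n₀ ((l' + 1) * n₀) ψ‖ ^ (-s) ≤ ((M:ℝ) ^ n₀) ^ s := by
    intro ψ hψ ω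
    have h1 := hnormge ψ hψ ω
    have h2 : (0:ℝ) < ((M:ℝ) ^ n₀)⁻¹ := by positivity
    calc ‖blockProd T ω n₀ ((l' + 1) * n₀) ψ‖ ^ (-s)
        ≤ (((M:ℝ) ^ n₀)⁻¹) ^ (-s) :=
          Real.rpow_le_rpow_of_nonpos h2 h1 (by linarith)
      _ = ((M:ℝ) ^ n₀) ^ s := by
          rw [Real.inv_rpow (by positivity), Real.rpow_neg (by positivity), inv_inv]
  -- integral bound for fixed unit vectors
  set q : ℝ := 1 - c₄ / ((l' + 1 : ℕ) : ℝ) ^ (2 * α) with hqdef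
  have hIf : ∀ ψ : E2, ‖ψ‖ = 1 → ∫⁻ ω, fE ψ ω ∂μ ≤ ENNReal.ofReal q := by
    intro ψ hψ
    have hm1 : Measurable (fun ω => (blockProd T ω n₀ ((l' + 1) * n₀)) ψ) :=
      (ContinuousLinearMap.apply ℝ E2 ψ).continuous.measurable.comp hBamb
    have hm2 : Measurable (fun ω => ‖(blockProd T ω n₀ ((l' + 1) * n₀)) ψ‖ ^ (-s)) :=
      hm1.norm.pow_const _
    have hint : Integrable (fun ω => ‖blockProd T ω n₀ ((l' + 1) * n₀) ψ‖ ^ (-s)) μ := by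
      refine Integrable.mono' (integrable_const (((M:ℝ) ^ n₀) ^ s))
        hm2.aestronglyMeasurable
        (ae_of_all _ fun ω => ?_)
      rw [Real.norm_eq_abs, abs_of_nonneg (Real.rpow_nonneg (norm_nonneg _) _)]
      exact hub ψ hψ ω
    have hnn : 0 ≤ᵐ[μ] (fun ω => ‖blockProd T ω n₀ ((l' + 1) * n₀) ψ‖ ^ (-s)) :=
      ae_of_all _ fun ω => Real.rpow_nonneg (norm_nonneg _) _
    have heq := ofReal_integral_eq_lintegral_ofReal hint hnn
    rw [hfEdef]
    simp only
    rw [← heq]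
    exact ENNReal.ofReal_le_ofReal
      (fixed_block μ T hmeas hTM hM hs hlow hblock (l' + 1) (by omega) ψ hψ)
  -- dense sequence on the unit sphere
  obtain ⟨u, hu1, hu2⟩ : ∃ u : ℕ → E2, (∀ k, ‖u k‖ = 1) ∧
      ∀ ψ : E2, ‖ψ‖ = 1 → ∀ ε : ℝ, 0 < ε → ∃ k, ‖ψ - u k‖ < ε := by
    have hne : Nonempty (Metric.sphere (0:E2) 1) := by
      refine ⟨⟨EuclideanSpace.single 0 1, ?_⟩⟩
      simp [EuclideanSpace.norm_single]
    obtain ⟨v, hv⟩ := TopologicalSpace.exists_dense_seq (Metric.sphere (0:E2) 1)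
    refine ⟨fun k => (v k : E2), fun k => by simpa using mem_sphere_zero_iff_norm.mp (v k).2, ?_⟩
    intro ψ hψ ε hε
    obtain ⟨k, hk⟩ := Metric.denseRange_iff.mp hv ⟨ψ, mem_sphere_zero_iff_norm.mpr hψ⟩ ε hε
    refine ⟨k, ?_⟩
    rw [Subtype.dist_eq] at hk
    simpa [dist_eq_norm] using hk
  -- the Lipschitz constant
  set K : ℝ := s * ((M:ℝ) ^ n₀) ^ (s + 1) * (M:ℝ) ^ n₀ with hKdef
  have hK0 : 0 < K := by positivity
  -- main epsilon-estimate
  have main : ∀ ε : ℝ, 0 < ε →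
      ∫⁻ ω, F ω * g ω ∂μ ≤ (ENNReal.ofReal q + ENNReal.ofReal (K * ε)) * ∫⁻ ω, g ω ∂μ := by
    intro ε hε
    set Bs : ℕ → Set Ω := fun k => {ω | ‖ψf ω - u k‖ < ε} with hBsdef
    set A : ℕ → Set Ω := fun k => Bs k \ ⋃ (j : ℕ) (_ : j < k), Bs j with hAdef
    have hBs𝓕 : ∀ k, MeasurableSet[pastSA T N] (Bs k) := by
      intro k
      have hout : Measurable (fun v : E2 => ‖v - u k‖) :=
        (measurable_id.sub measurable_const).norm
      have : Measurable[pastSA T N] (fun ω => ‖ψf ω - u k‖) := hout.comp hψmeas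
      exact this measurableSet_Iio
    have hA𝓕 : ∀ k, MeasurableSet[pastSA T N] (A k) := by
      intro k
      exact (hBs𝓕 k).diff (MeasurableSet.iUnion fun j => MeasurableSet.iUnion fun _ => hBs𝓕 j)
    have hAamb : ∀ k, MeasurableSet (A k) := fun k => h𝓕le _ (hA𝓕 k)
    have hmem : ∀ ω, ∃ k, ω ∈ A k ∧ ∀ j, j ≠ k → ω ∉ A j := by
      intro ω
      have hex : ∃ k, ω ∈ Bs k := by
        obtain ⟨k, hk⟩ := hu2 (ψf ω) (hψ1 ω) ε hε
        exact ⟨k, hk⟩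
      set k := Nat.find hex with hkdef
      refine ⟨k, ⟨Nat.find_spec hex, ?_⟩, ?_⟩
      · intro hmem
        simp only [Set.mem_iUnion] at hmem
        obtain ⟨j, hj, hmemj⟩ := hmem
        exact (Nat.find_min hex hj) hmemj
      · intro j hj hAj
        rcases Nat.lt_or_ge j k with hlt | hge
        · exact (Nat.find_min hex hlt) hAj.1
        · have hk_lt : k < j := by omega
          refine hAj.2 ?_
          simp only [Set.mem_iUnion]
          exact ⟨k, hk_lt, Nat.find_spec hex⟩
    have hpart : ∀ (h : Ω → ENNReal) (ω : Ω), (∑' k, (A k).indicator h ω) = h ω := by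
      intro h ω
      obtain ⟨k, hk, huniq⟩ := hmem ω
      rw [tsum_eq_single k (fun j hj => Set.indicator_of_notMem (huniq j hj) h)]
      exact Set.indicator_of_mem hk h
    -- pointwise comparison on A k
    have hptwise : ∀ k ω, (A k).indicator (fun ω => F ω * g ω) ω ≤
        fE (u k) ω * (A k).indicator g ω + ENNReal.ofReal (K * ε) * (A k).indicator g ω := by
      intro k ω
      by_cases hω : ω ∈ A k
      · rw [Set.indicator_of_mem hω, Set.indicator_of_mem hω]
        have hclose : ‖ψf ω - u k‖ < ε := hω.1
        have hFle : F ω ≤ fE (u k) ω + ENNReal.ofReal (K * ε) := by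
          set x := ‖blockProd T ω n₀ ((l' + 1) * n₀) (ψf ω)‖ with hxdef
          set y := ‖blockProd T ω n₀ ((l' + 1) * n₀) (u k)‖ with hydef
          have hbx : ((M:ℝ) ^ n₀)⁻¹ ≤ x := hnormge _ (hψ1 ω) ω
          have hby : ((M:ℝ) ^ n₀)⁻¹ ≤ y := hnormge _ (hu1 k) ω
          have hbpos : (0:ℝ) < ((M:ℝ) ^ n₀)⁻¹ := by positivity
          have hlip := abs_rpow_sub_rpow_le (p := -s) hbpos (by linarith) hbx hby
          have hxy : |x - y| ≤ (M:ℝ) ^ n₀ * ε := by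
            have h1 : |x - y| ≤ ‖blockProd T ω n₀ ((l' + 1) * n₀) (ψf ω)
                - blockProd T ω n₀ ((l' + 1) * n₀) (u k)‖ := abs_norm_sub_norm_le _ _
            have h2 : blockProd T ω n₀ ((l' + 1) * n₀) (ψf ω)
                - blockProd T ω n₀ ((l' + 1) * n₀) (u k)
                = blockProd T ω n₀ ((l' + 1) * n₀) (ψf ω - u k) := by
              rw [map_sub]
            rw [h2] at h1
            calc |x - y| ≤ ‖blockProd T ω n₀ ((l' + 1) * n₀) (ψf ω - u k)‖ := h1
              _ ≤ M ^ n₀ * ‖ψf ω - u k‖ := blockProd_norm_le T hTM hM ω n₀ _ _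
              _ ≤ (M:ℝ) ^ n₀ * ε := by
                  apply mul_le_mul_of_nonneg_left hclose.le (by positivity)
          have hconst : |(-s)| * (((M:ℝ) ^ n₀)⁻¹) ^ (-s - 1) = s * ((M:ℝ) ^ n₀) ^ (s + 1) := by
            rw [abs_neg, abs_of_pos hs]
            congr 1
            rw [Real.inv_rpow (by positivity), show (-s - 1 : ℝ) = -(s+1) by ring,
              Real.rpow_neg (by positivity), inv_inv]
          have hx_le : x ^ (-s) ≤ y ^ (-s) + K * ε := by
            have h3 : x ^ (-s) - y ^ (-s) ≤ |x ^ (-s) - y ^ (-s)| := le_abs_self _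
            have h4 : |x ^ (-s) - y ^ (-s)| ≤ s * ((M:ℝ) ^ n₀) ^ (s + 1) * ((M:ℝ) ^ n₀ * ε) := by
              calc |x ^ (-s) - y ^ (-s)|
                  ≤ |(-s)| * (((M:ℝ) ^ n₀)⁻¹) ^ (-s - 1) * |x - y| := hlip
                _ = s * ((M:ℝ) ^ n₀) ^ (s + 1) * |x - y| := by rw [hconst]
                _ ≤ s * ((M:ℝ) ^ n₀) ^ (s + 1) * ((M:ℝ) ^ n₀ * ε) :=
                    mul_le_mul_of_nonneg_left hxy (by positivity)
            have : s * ((M:ℝ) ^ n₀) ^ (s + 1) * ((M:ℝ) ^ n₀ * ε) = K * ε := by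
              rw [hKdef]; ring
            linarith
          calc F ω = ENNReal.ofReal (x ^ (-s)) := rfl
            _ ≤ ENNReal.ofReal (y ^ (-s) + K * ε) := ENNReal.ofReal_le_ofReal hx_le
            _ = ENNReal.ofReal (y ^ (-s)) + ENNReal.ofReal (K * ε) := by
                rw [ENNReal.ofReal_add (Real.rpow_nonneg (norm_nonneg _) _) (by positivity)]
            _ = fE (u k) ω + ENNReal.ofReal (K * ε) := rfl
        calc F ω * g ω ≤ (fE (u k) ω + ENNReal.ofReal (K * ε)) * g ω :=
              mul_le_mul_left hFle _
          _ = fE (u k) ω * g ω + ENNReal.ofReal (K * ε) * g ω := by rw [add_mul]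
      · rw [Set.indicator_of_notMem hω, Set.indicator_of_notMem hω]
        simp
    -- decompose the integral along the partition
    have hsplit : ∫⁻ ω, F ω * g ω ∂μ
        = ∑' k, ∫⁻ ω, (A k).indicator (fun ω => F ω * g ω) ω ∂μ := by
      have h1 : ∫⁻ ω, F ω * g ω ∂μ
          = ∫⁻ ω, ∑' k, (A k).indicator (fun ω => F ω * g ω) ω ∂μ :=
        lintegral_congr fun ω => (hpart (fun ω => F ω * g ω) ω).symm
      rw [h1]; exact lintegral_tsum (fun k => ((hFmeas.mul hgamb).indicator (hAamb k)).aemeasurable)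
    have hterm : ∀ k, ∫⁻ ω, (A k).indicator (fun ω => F ω * g ω) ω ∂μ
        ≤ (ENNReal.ofReal q + ENNReal.ofReal (K * ε)) * ∫⁻ ω, (A k).indicator g ω ∂μ := by
      intro k
      have hgk : Measurable ((A k).indicator g) := hgamb.indicator (hAamb k)
      have hgk𝓕 : Measurable[pastSA T N] ((A k).indicator g) := hg.indicator (hA𝓕 k)
      have hIndepFun : IndepFun (fE (u k)) ((A k).indicator g) μ :=
        indep_of_indep_of_le_left (indep_of_indep_of_le_right hIndep hgk𝓕.comap_le)
          (hfE𝓑 (u k)).comap_le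
      calc ∫⁻ ω, (A k).indicator (fun ω => F ω * g ω) ω ∂μ
          ≤ ∫⁻ ω, (fE (u k) ω * (A k).indicator g ω
              + ENNReal.ofReal (K * ε) * (A k).indicator g ω) ∂μ :=
            lintegral_mono (fun ω => hptwise k ω)
        _ = (∫⁻ ω, fE (u k) ω * (A k).indicator g ω ∂μ)
              + ENNReal.ofReal (K * ε) * ∫⁻ ω, (A k).indicator g ω ∂μ := by
            rw [lintegral_add_left (f := fun ω => fE (u k) ω * (A k).indicator g ω) ((hfEmeas (u k)).mul hgk), lintegral_const_mul _ hgk]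
        _ = (∫⁻ ω, fE (u k) ω ∂μ) * (∫⁻ ω, (A k).indicator g ω ∂μ)
              + ENNReal.ofReal (K * ε) * ∫⁻ ω, (A k).indicator g ω ∂μ := by
            have := lintegral_mul_eq_lintegral_mul_lintegral_of_indepFun
              (hfEmeas (u k)) hgk hIndepFun (μ := μ)
            simp only [Pi.mul_apply] at this
            rw [this]
        _ ≤ ENNReal.ofReal q * (∫⁻ ω, (A k).indicator g ω ∂μ)
              + ENNReal.ofReal (K * ε) * ∫⁻ ω, (A k).indicator g ω ∂μ :=
            add_le_add_left (mul_le_mul_left (hIf (u k) (hu1 k)) _) _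
        _ = (ENNReal.ofReal q + ENNReal.ofReal (K * ε)) * ∫⁻ ω, (A k).indicator g ω ∂μ := by
            rw [add_mul]
    have hgsum : ∑' k, ∫⁻ ω, (A k).indicator g ω ∂μ = ∫⁻ ω, g ω ∂μ := by
      have h1 : ∫⁻ ω, g ω ∂μ = ∫⁻ ω, ∑' k, (A k).indicator g ω ∂μ :=
        lintegral_congr fun ω => (hpart g ω).symm
      rw [h1, lintegral_tsum (fun k => (hgamb.indicator (hAamb k)).aemeasurable)]
    calc ∫⁻ ω, F ω * g ω ∂μ
        = ∑' k, ∫⁻ ω, (A k).indicator (fun ω => F ω * g ω) ω ∂μ := hsplit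
      _ ≤ ∑' k, (ENNReal.ofReal q + ENNReal.ofReal (K * ε))
            * ∫⁻ ω, (A k).indicator g ω ∂μ := ENNReal.tsum_le_tsum hterm
      _ = (ENNReal.ofReal q + ENNReal.ofReal (K * ε)) * ∫⁻ ω, g ω ∂μ := by
          rw [ENNReal.tsum_mul_left, hgsum]
  -- let ε → 0
  refine ENNReal.le_of_forall_pos_le_add ?_
  intro δ hδ _
  set G := ∫⁻ ω, g ω ∂μ with hGdef
  set Gr := G.toReal with hGrdef
  have hGr0 : 0 ≤ Gr := ENNReal.toReal_nonneg
  have hδR : (0:ℝ) < (δ : ℝ) := hδ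
  set ε : ℝ := (δ : ℝ) / (K * (Gr + 1)) with hεdef
  have hε : 0 < ε := by positivity
  have h1 := main ε hε
  have h2 : ENNReal.ofReal (K * ε) * G ≤ (δ : ENNReal) := by
    have hGof : G = ENNReal.ofReal Gr := (ENNReal.ofReal_toReal hgtop).symm
    rw [hGof, ← ENNReal.ofReal_mul (by positivity)]
    have hle : K * ε * Gr ≤ (δ : ℝ) := by
      have hKG : (0:ℝ) < K * (Gr + 1) := by positivity
      have he : K * ε * (Gr + 1) = (δ:ℝ) := by
        rw [hεdef]
        field_simp
      nlinarith [mul_pos hK0 hε]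
    calc ENNReal.ofReal (K * ε * Gr) ≤ ENNReal.ofReal (δ:ℝ) := ENNReal.ofReal_le_ofReal hle
      _ = (δ : ENNReal) := ENNReal.ofReal_coe_nnreal
  calc ∫⁻ ω, F ω * g ω ∂μ
      ≤ (ENNReal.ofReal q + ENNReal.ofReal (K * ε)) * G := h1
    _ = ENNReal.ofReal q * G + ENNReal.ofReal (K * ε) * G := by rw [add_mul]
    _ ≤ ENNReal.ofReal q * G + δ := add_le_add_right h2 _

end CoreLemma

set_option maxHeartbeats 2000000 in
/-- Iterated-conditioning estimate: if each block of `n₀` consecutive independent transfer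
matrices contracts the negative fractional moment by `1 - c₄ l^{-2α}` conditionally on the
past, and all matrices and their inverses are bounded by `M`, then
`E[‖T_n ⋯ T_m ψ₀‖^{-s}] ≤ C exp(c m^{1-2α} - c n^{1-2α})`. -/
theorem stmt_15 (M c₄ s α : ℝ) (n₀ : ℕ) (hM : 1 ≤ M) (hc₄ : 0 < c₄) (hs : 0 < s)
    (hα0 : 0 < α) (hα : α < 1 / 2) (hn₀ : 1 ≤ n₀)
    {Ω : Type} [MeasurableSpace Ω] (μ : Measure Ω) [IsProbabilityMeasure μ]
    (T S : ℕ → Ω → (EuclideanSpace ℝ (Fin 2) →L[ℝ] EuclideanSpace ℝ (Fin 2)))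
    (hmeas : ∀ j, Measurable (T j))
    (hindep : iIndepFun T μ)
    (hTM : ∀ j ω, ‖T j ω‖ ≤ M) (hSM : ∀ j ω, ‖S j ω‖ ≤ M)
    (hinv : ∀ j ω, T j ω ∘L S j ω = ContinuousLinearMap.id ℝ (EuclideanSpace ℝ (Fin 2)) ∧
      S j ω ∘L T j ω = ContinuousLinearMap.id ℝ (EuclideanSpace ℝ (Fin 2)))
    (hblock : ∀ l : ℕ, 1 ≤ l → ∀ ψ : EuclideanSpace ℝ (Fin 2), ‖ψ‖ = 1 →
      μ[(fun ω => ‖(blockProd T ω n₀ (l * n₀)) ψ‖ ^ (-s)) |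
          ⨆ j ∈ Finset.Icc 1 ((l - 1) * n₀), MeasurableSpace.comap (T j) inferInstance]
        ≤ᵐ[μ] fun _ => 1 - c₄ / (l : ℝ) ^ (2 * α)) :
    ∃ C > 0, ∃ c > 0, ∀ m n : ℕ, m < n → ∀ ψ₀ : EuclideanSpace ℝ (Fin 2), ‖ψ₀‖ = 1 →
      ∫ ω, ‖(blockProd T ω (n - m + 1) n) ψ₀‖ ^ (-s) ∂μ ≤
        C * Real.exp (c * (m : ℝ) ^ (1 - 2 * α) - c * (n : ℝ) ^ (1 - 2 * α)) := by
  classical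
  have hM0 : (0:ℝ) < M := lt_of_lt_of_le one_pos hM
  have hp0 : (0:ℝ) < 1 - 2 * α := by linarith
  have hp1 : (1 - 2 * α : ℝ) ≤ 1 := by linarith
  set p : ℝ := 1 - 2 * α with hpdef
  have hlow : ∀ j ω (v : E2), ‖v‖ ≤ M * ‖T j ω v‖ := by
    intro j ω v
    have hv : S j ω (T j ω v) = v := by
      rw [← ContinuousLinearMap.comp_apply, (hinv j ω).2, ContinuousLinearMap.id_apply]
    calc ‖v‖ = ‖S j ω (T j ω v)‖ := by rw [hv]
      _ ≤ ‖S j ω‖ * ‖T j ω v‖ := le_opNorm _ _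
      _ ≤ M * ‖T j ω v‖ := mul_le_mul_of_nonneg_right (hSM j ω) (norm_nonneg _)
  -- positivity of the contraction factors
  have hqpos : ∀ l : ℕ, 1 ≤ l → 0 < 1 - c₄ / (l : ℝ) ^ (2 * α) := by
    intro l hl
    set e : E2 := EuclideanSpace.single 0 1 with hedef
    have he : ‖e‖ = 1 := by simp [hedef, EuclideanSpace.norm_single]
    have hBmeas : Measurable (fun ω => blockProd T ω n₀ (l * n₀)) :=
      blockProd_measurable T _ n₀ (l * n₀) (fun i _ => hmeas _)
    have hfmeas : Measurable (fun ω => ‖blockProd T ω n₀ (l * n₀) e‖ ^ (-s)) :=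
      (((ContinuousLinearMap.apply ℝ E2 e).continuous.measurable.comp hBmeas).norm).pow_const _
    have hlb : ∀ ω, ((M:ℝ) ^ n₀) ^ (-s) ≤ ‖blockProd T ω n₀ (l * n₀) e‖ ^ (-s) := by
      intro ω
      have h1 : ‖blockProd T ω n₀ (l * n₀) e‖ ≤ (M:ℝ) ^ n₀ := by
        have h := blockProd_norm_le T hTM hM ω n₀ (l * n₀) e
        rwa [he, mul_one] at h
      have h2 : (0:ℝ) < ‖blockProd T ω n₀ (l * n₀) e‖ := by
        have h := blockProd_norm_ge T hM hlow ω n₀ (l * n₀) e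
        rw [he] at h
        nlinarith [pow_pos hM0 n₀]
      exact Real.rpow_le_rpow_of_nonpos h2 h1 (by linarith)
    have hub : ∀ ω, ‖blockProd T ω n₀ (l * n₀) e‖ ^ (-s) ≤ ((M:ℝ) ^ n₀) ^ s := by
      intro ω
      have h2 : (0:ℝ) < ((M:ℝ) ^ n₀)⁻¹ := by positivity
      have h1 : ((M:ℝ) ^ n₀)⁻¹ ≤ ‖blockProd T ω n₀ (l * n₀) e‖ := by
        have h := blockProd_norm_ge T hM hlow ω n₀ (l * n₀) e
        rw [he] at h
        have hpos : (0:ℝ) < M ^ n₀ := by positivity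
        rw [inv_eq_one_div, div_le_iff₀ hpos]
        nlinarith
      calc ‖blockProd T ω n₀ (l * n₀) e‖ ^ (-s)
          ≤ (((M:ℝ) ^ n₀)⁻¹) ^ (-s) := Real.rpow_le_rpow_of_nonpos h2 h1 (by linarith)
        _ = ((M:ℝ) ^ n₀) ^ s := by
            rw [Real.inv_rpow (by positivity), Real.rpow_neg (by positivity), inv_inv]
    have hint : Integrable (fun ω => ‖blockProd T ω n₀ (l * n₀) e‖ ^ (-s)) μ := by
      refine Integrable.mono' (integrable_const (((M:ℝ) ^ n₀) ^ s))
        hfmeas.aestronglyMeasurable (ae_of_all _ fun ω => ?_)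
      rw [Real.norm_eq_abs, abs_of_nonneg (Real.rpow_nonneg (norm_nonneg _) _)]
      exact hub ω
    have hlow' : ((M:ℝ) ^ n₀) ^ (-s) ≤ ∫ ω, ‖blockProd T ω n₀ (l * n₀) e‖ ^ (-s) ∂μ := by
      have := integral_mono (integrable_const (((M:ℝ) ^ n₀) ^ (-s))) hint (fun ω => hlb ω)
      simpa using this
    have hup' := fixed_block μ T hmeas hTM hM hs hlow hblock l hl e he
    have hpos : (0:ℝ) < ((M:ℝ) ^ n₀) ^ (-s) := Real.rpow_pos_of_pos (by positivity) _
    linarith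
  have hn₀R : (0:ℝ) < (n₀ : ℝ) := by exact_mod_cast hn₀
  set c : ℝ := c₄ / (p * (n₀ : ℝ) ^ p) with hcdef
  have hc : 0 < c := div_pos hc₄ (mul_pos hp0 (Real.rpow_pos_of_pos hn₀R p))
  set C : ℝ := ((M:ℝ) ^ (2 * n₀)) ^ s * Real.exp (2 * c₄ / p + c * (n₀:ℝ)) with hCdef
  have hC : 0 < C := by positivity
  refine ⟨C, hC, c, hc, ?_⟩
  intro m n hmn ψ₀ hψ₀
  -- measurability of the various integrands
  have hBmeasA : ∀ len top : ℕ, Measurable (fun ω => blockProd T ω len top) :=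
    fun len top => blockProd_measurable T _ len top (fun i _ => hmeas _)
  have hnmeas : ∀ len top : ℕ, Measurable (fun ω => ‖blockProd T ω len top ψ₀‖ ^ (-s)) :=
    fun len top =>
      (((ContinuousLinearMap.apply ℝ E2 ψ₀).continuous.measurable.comp (hBmeasA len top)).norm).pow_const _
  -- generic upper bound on the integrand
  have hnormge : ∀ (len top : ℕ) ω, ((M:ℝ) ^ len)⁻¹ ≤ ‖blockProd T ω len top ψ₀‖ := by
    intro len top ω
    have h := blockProd_norm_ge T hM hlow ω len top ψ₀
    rw [hψ₀] at h
    have hpos : (0:ℝ) < M ^ len := by positivity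
    rw [inv_eq_one_div, div_le_iff₀ hpos]
    nlinarith
  have hnormpos : ∀ (len top : ℕ) ω, (0:ℝ) < ‖blockProd T ω len top ψ₀‖ := by
    intro len top ω
    have := hnormge len top ω
    have hpos : (0:ℝ) < ((M:ℝ) ^ len)⁻¹ := by positivity
    linarith
  have hup : ∀ (len top : ℕ) ω, ‖blockProd T ω len top ψ₀‖ ^ (-s) ≤ ((M:ℝ) ^ len) ^ s := by
    intro len top ω
    have h1 := hnormge len top ω
    have h2 : (0:ℝ) < ((M:ℝ) ^ len)⁻¹ := by positivity
    calc ‖blockProd T ω len top ψ₀‖ ^ (-s)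
        ≤ (((M:ℝ) ^ len)⁻¹) ^ (-s) := Real.rpow_le_rpow_of_nonpos h2 h1 (by linarith)
      _ = ((M:ℝ) ^ len) ^ s := by
          rw [Real.inv_rpow (by positivity), Real.rpow_neg (by positivity), inv_inv]
  have hMup : ∀ len len' : ℕ, len ≤ len' → ((M:ℝ) ^ len) ^ s ≤ ((M:ℝ) ^ len') ^ s := by
    intro len len' h
    exact Real.rpow_le_rpow (by positivity) (pow_le_pow_right₀ hM h) hs.le
  -- rewrite integral as a lower Lebesgue integral
  rw [integral_eq_lintegral_of_nonneg_ae
    (ae_of_all _ fun ω => Real.rpow_nonneg (norm_nonneg _) _)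
    (hnmeas (n - m + 1) n).aestronglyMeasurable]
  have htarget0 : (0:ℝ) ≤ C * Real.exp (c * (m : ℝ) ^ p - c * (n : ℝ) ^ p) := by positivity
  rw [← ENNReal.toReal_ofReal htarget0]
  refine ENNReal.toReal_mono ENNReal.ofReal_ne_top ?_
  -- now an ENNReal inequality
  have hn₀pos : 0 < n₀ := by omega
  obtain ⟨a1, hF1, hF2⟩ : ∃ x : ℕ, m < x * n₀ ∧ x * n₀ ≤ m + n₀ := by
    refine ⟨m / n₀ + 1, ?_, ?_⟩
    · exact (Nat.div_lt_iff_lt_mul hn₀pos).mp (Nat.lt_succ_self _)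
    · rw [add_mul, one_mul]
      exact Nat.add_le_add_right (Nat.div_mul_le_self m n₀) n₀
  obtain ⟨b, hF4, hF5⟩ : ∃ x : ℕ, x * n₀ ≤ n ∧ n < (x + 1) * n₀ := by
    refine ⟨n / n₀, Nat.div_mul_le_self n n₀, ?_⟩
    exact (Nat.div_lt_iff_lt_mul hn₀pos).mp (Nat.lt_succ_self _)
  have hF5' : n < b * n₀ + n₀ := by
    have h := hF5
    rwa [add_mul, one_mul] at h
  have hma : m ≤ a1 * n₀ := hF1.le
  -- the key induction
  have key : ∀ k : ℕ, a1 ≤ k →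
      ∫⁻ ω, ENNReal.ofReal (‖blockProd T ω (k * n₀ + 1 - m) (k * n₀) ψ₀‖ ^ (-s)) ∂μ
        ≤ ENNReal.ofReal (((M:ℝ) ^ (n₀ + 1)) ^ s)
          * ∏ l ∈ Finset.Icc (a1 + 1) k, ENNReal.ofReal (1 - c₄ / (l : ℝ) ^ (2 * α)) := by
    intro k hk
    induction k, hk using Nat.le_induction with
    | base =>
      have hlen : a1 * n₀ + 1 - m ≤ n₀ + 1 := by omega
      calc ∫⁻ ω, ENNReal.ofReal
            (‖blockProd T ω (a1 * n₀ + 1 - m) (a1 * n₀) ψ₀‖ ^ (-s)) ∂μ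
          ≤ ∫⁻ _, ENNReal.ofReal (((M:ℝ) ^ (n₀ + 1)) ^ s) ∂μ := by
            refine lintegral_mono fun ω => ENNReal.ofReal_le_ofReal ?_
            exact (hup _ _ ω).trans (hMup _ _ hlen)
        _ = ENNReal.ofReal (((M:ℝ) ^ (n₀ + 1)) ^ s) := by
            simp [lintegral_const]
        _ = ENNReal.ofReal (((M:ℝ) ^ (n₀ + 1)) ^ s)
            * ∏ l ∈ Finset.Icc (a1 + 1) a1, ENNReal.ofReal (1 - c₄ / (l : ℝ) ^ (2 * α)) := by
            rw [Finset.Icc_eq_empty (by omega), Finset.prod_empty, mul_one]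
    | succ k hk ih =>
      have hmk : m ≤ k * n₀ :=
        le_trans hma (Nat.mul_le_mul hk (le_refl n₀))
      have hmulk : (k + 1) * n₀ = k * n₀ + n₀ := by ring
      have hsplitlen : (k + 1) * n₀ + 1 - m = n₀ + (k * n₀ + 1 - m) := by
        rw [hmulk]; omega
      have htop : (k + 1) * n₀ - n₀ = k * n₀ := by rw [hmulk]; omega
      -- W, r, ψ'
      set W : Ω → E2 := fun ω => blockProd T ω (k * n₀ + 1 - m) (k * n₀) ψ₀ with hWdef
      set r : Ω → ℝ := fun ω => ‖W ω‖ with hrdef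
      have hrpos : ∀ ω, 0 < r ω := fun ω => hnormpos _ _ ω
      set ψ' : Ω → E2 := fun ω => (r ω)⁻¹ • W ω with hψ'def
      have hψ'1 : ∀ ω, ‖ψ' ω‖ = 1 := by
        intro ω
        rw [hψ'def]
        simp only [norm_smul, Real.norm_eq_abs, abs_inv, abs_of_pos (hrpos ω)]
        rw [inv_mul_cancel₀ (hrpos ω).ne']
      set g : Ω → ENNReal := fun ω => ENNReal.ofReal (r ω ^ (-s)) with hgdef
      -- measurability w.r.t. the past
      set N : ℕ := k * n₀ + 1 with hNdef
      have hW𝓕 : Measurable[pastSA T N] (fun ω => blockProd T ω (k * n₀ + 1 - m) (k * n₀)) := by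
        refine blockProd_measurable T _ _ _ (fun i hi => ?_)
        refine measurable_iff_comap_le.mpr ?_
        refine le_iSup₂ (f := fun j (_ : j ∈ Set.Iio N) =>
          MeasurableSpace.comap (T j) inferInstance) (k * n₀ - i) ?_
        simp only [Set.mem_Iio]
        omega
      have hWψ𝓕 : Measurable[pastSA T N] W :=
        (ContinuousLinearMap.apply ℝ E2 ψ₀).continuous.measurable.comp hW𝓕
      have hnout : Measurable (fun v : E2 => ‖v‖⁻¹ • v) :=
        (measurable_norm.inv).smul measurable_id
      have hψ'𝓕 : Measurable[pastSA T N] ψ' := hnout.comp hWψ𝓕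
      have hgout : Measurable (fun v : E2 => ENNReal.ofReal (‖v‖ ^ (-s))) :=
        ENNReal.measurable_ofReal.comp (measurable_norm.pow_const _)
      have hg𝓕 : Measurable[pastSA T N] g := hgout.comp hWψ𝓕
      have hgbound : ∀ ω, g ω ≤ ENNReal.ofReal (((M:ℝ) ^ (k * n₀ + 1 - m)) ^ s) :=
        fun ω => ENNReal.ofReal_le_ofReal (hup _ _ ω)
      have hgtop : ∫⁻ ω, g ω ∂μ ≠ ⊤ := by
        have hle : ∫⁻ ω, g ω ∂μ ≤ ENNReal.ofReal (((M:ℝ) ^ (k * n₀ + 1 - m)) ^ s) := by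
          calc ∫⁻ ω, g ω ∂μ ≤ ∫⁻ _, ENNReal.ofReal (((M:ℝ) ^ (k * n₀ + 1 - m)) ^ s) ∂μ :=
                lintegral_mono hgbound
            _ = ENNReal.ofReal (((M:ℝ) ^ (k * n₀ + 1 - m)) ^ s) := by simp [lintegral_const]
        exact ne_top_of_le_ne_top ENNReal.ofReal_ne_top hle
      -- pointwise factorization of the integrand
      have hfact : ∀ ω, ENNReal.ofReal
            (‖blockProd T ω ((k+1) * n₀ + 1 - m) ((k+1) * n₀) ψ₀‖ ^ (-s))
          = ENNReal.ofReal (‖blockProd T ω n₀ ((k+1) * n₀) (ψ' ω)‖ ^ (-s)) * g ω := by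
        intro ω
        have hsplit : blockProd T ω ((k+1) * n₀ + 1 - m) ((k+1) * n₀)
            = blockProd T ω n₀ ((k+1) * n₀) * blockProd T ω (k * n₀ + 1 - m) (k * n₀) := by
          rw [hsplitlen, blockProd_add, htop]
        have hWsm : W ω = r ω • ψ' ω := by
          rw [hψ'def]
          simp only [smul_smul, mul_inv_cancel₀ (hrpos ω).ne', one_smul]
        have hnorm : ‖blockProd T ω ((k+1) * n₀ + 1 - m) ((k+1) * n₀) ψ₀‖
            = r ω * ‖blockProd T ω n₀ ((k+1) * n₀) (ψ' ω)‖ := by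
          rw [hsplit, ContinuousLinearMap.mul_apply]
          change ‖blockProd T ω n₀ ((k+1) * n₀) (W ω)‖ = _
          rw [hWsm, _root_.map_smul, norm_smul, Real.norm_eq_abs, abs_of_pos (hrpos ω)]
        rw [hnorm, Real.mul_rpow (hrpos ω).le (norm_nonneg _),
          ENNReal.ofReal_mul (Real.rpow_nonneg (hrpos ω).le _)]
        ring
      rw [lintegral_congr hfact]
      have hcore := core_block μ T hmeas hindep hTM hM hs hn₀ hlow hblock
        (k + 1) N (by omega) (by simp [hNdef]) ψ' hψ'𝓕 hψ'1 g hg𝓕 hgtop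
      calc ∫⁻ ω, ENNReal.ofReal (‖blockProd T ω n₀ ((k+1) * n₀) (ψ' ω)‖ ^ (-s)) * g ω ∂μ
          ≤ ENNReal.ofReal (1 - c₄ / ((k+1 : ℕ) : ℝ) ^ (2 * α)) * ∫⁻ ω, g ω ∂μ := hcore
        _ ≤ ENNReal.ofReal (1 - c₄ / ((k+1 : ℕ) : ℝ) ^ (2 * α))
            * (ENNReal.ofReal (((M:ℝ) ^ (n₀ + 1)) ^ s)
              * ∏ l ∈ Finset.Icc (a1 + 1) k, ENNReal.ofReal (1 - c₄ / (l : ℝ) ^ (2 * α))) :=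
            mul_le_mul_right ih _
        _ = ENNReal.ofReal (((M:ℝ) ^ (n₀ + 1)) ^ s)
            * ∏ l ∈ Finset.Icc (a1 + 1) (k+1), ENNReal.ofReal (1 - c₄ / (l : ℝ) ^ (2 * α)) := by
            rw [Finset.prod_Icc_succ_top (show a1 + 1 ≤ k + 1 by omega)]
            ring
  -- split into the two cases
  by_cases hcase : a1 ≤ b
  · -- main case: at least one full block
    have hbn : b * n₀ ≤ n := hF4
    have hmb : m ≤ b * n₀ := le_trans hma (Nat.mul_le_mul hcase (le_refl n₀))
    set lenTop : ℕ := n - b * n₀ with hlenTopdef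
    have hlenTople : lenTop ≤ n₀ - 1 := by omega
    have hsplice : n - m + 1 = lenTop + (b * n₀ + 1 - m) := by omega
    have htop2 : n - lenTop = b * n₀ := by omega
    -- pointwise estimate for the top boundary
    have hpt : ∀ ω, ENNReal.ofReal (‖blockProd T ω (n - m + 1) n ψ₀‖ ^ (-s))
        ≤ ENNReal.ofReal (((M:ℝ) ^ lenTop) ^ s)
          * ENNReal.ofReal (‖blockProd T ω (b * n₀ + 1 - m) (b * n₀) ψ₀‖ ^ (-s)) := by
      intro ω
      have hsplit : blockProd T ω (n - m + 1) n
          = blockProd T ω lenTop n * blockProd T ω (b * n₀ + 1 - m) (b * n₀) := by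
        rw [hsplice, blockProd_add, htop2]
      set w : E2 := blockProd T ω (b * n₀ + 1 - m) (b * n₀) ψ₀ with hwdef
      have hwpos : 0 < ‖w‖ := hnormpos _ _ ω
      have hMl : (0:ℝ) < (M:ℝ) ^ lenTop := by positivity
      have hgex : ‖w‖ ≤ (M:ℝ) ^ lenTop * ‖blockProd T ω lenTop n w‖ :=
        blockProd_norm_ge T hM hlow ω lenTop n w
      have hlb : ((M:ℝ) ^ lenTop)⁻¹ * ‖w‖ ≤ ‖blockProd T ω (n - m + 1) n ψ₀‖ := by
        rw [hsplit, ContinuousLinearMap.mul_apply]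
        rw [inv_mul_le_iff₀ hMl]
        exact hgex
      have hlbpos : (0:ℝ) < ((M:ℝ) ^ lenTop)⁻¹ * ‖w‖ := by positivity
      have hr1 : ‖blockProd T ω (n - m + 1) n ψ₀‖ ^ (-s)
          ≤ (((M:ℝ) ^ lenTop)⁻¹ * ‖w‖) ^ (-s) :=
        Real.rpow_le_rpow_of_nonpos hlbpos hlb (by linarith)
      have hr2 : (((M:ℝ) ^ lenTop)⁻¹ * ‖w‖) ^ (-s)
          = ((M:ℝ) ^ lenTop) ^ s * ‖w‖ ^ (-s) := by
        rw [Real.mul_rpow (by positivity) (norm_nonneg _), Real.inv_rpow (by positivity),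
          Real.rpow_neg (by positivity), inv_inv]
      calc ENNReal.ofReal (‖blockProd T ω (n - m + 1) n ψ₀‖ ^ (-s))
          ≤ ENNReal.ofReal (((M:ℝ) ^ lenTop) ^ s * ‖w‖ ^ (-s)) := by
            refine ENNReal.ofReal_le_ofReal ?_
            rw [← hr2]; exact hr1
        _ = ENNReal.ofReal (((M:ℝ) ^ lenTop) ^ s)
            * ENNReal.ofReal (‖w‖ ^ (-s)) := ENNReal.ofReal_mul (by positivity)
    have hclean : ∫⁻ ω, ENNReal.ofReal (‖blockProd T ω (n - m + 1) n ψ₀‖ ^ (-s)) ∂μ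
        ≤ ENNReal.ofReal (((M:ℝ) ^ lenTop) ^ s)
          * (ENNReal.ofReal (((M:ℝ) ^ (n₀ + 1)) ^ s)
            * ∏ l ∈ Finset.Icc (a1 + 1) b, ENNReal.ofReal (1 - c₄ / (l : ℝ) ^ (2 * α))) := by
      calc ∫⁻ ω, ENNReal.ofReal (‖blockProd T ω (n - m + 1) n ψ₀‖ ^ (-s)) ∂μ
          ≤ ∫⁻ ω, ENNReal.ofReal (((M:ℝ) ^ lenTop) ^ s)
              * ENNReal.ofReal (‖blockProd T ω (b * n₀ + 1 - m) (b * n₀) ψ₀‖ ^ (-s)) ∂μ :=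
            lintegral_mono hpt
        _ = ENNReal.ofReal (((M:ℝ) ^ lenTop) ^ s)
            * ∫⁻ ω, ENNReal.ofReal (‖blockProd T ω (b * n₀ + 1 - m) (b * n₀) ψ₀‖ ^ (-s)) ∂μ :=
            lintegral_const_mul _ (ENNReal.measurable_ofReal.comp (hnmeas _ _))
        _ ≤ _ := mul_le_mul_right (key b hcase) _
    refine le_trans hclean ?_
    -- collapse everything into a single real bound
    have hprodq : (∏ l ∈ Finset.Icc (a1 + 1) b, ENNReal.ofReal (1 - c₄ / (l : ℝ) ^ (2 * α)))
        = ENNReal.ofReal (∏ l ∈ Finset.Icc (a1 + 1) b, (1 - c₄ / (l : ℝ) ^ (2 * α))) := by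
      rw [ENNReal.ofReal_prod_of_nonneg]
      intro l hl
      have hl1 : 1 ≤ l := by
        have := (Finset.mem_Icc.mp hl).1
        omega
      exact (hqpos l hl1).le
    rw [hprodq, ← ENNReal.ofReal_mul (by positivity), ← ENNReal.ofReal_mul (by positivity)]
    refine ENNReal.ofReal_le_ofReal ?_
    -- the real estimate
    set P : ℝ := ∏ l ∈ Finset.Icc (a1 + 1) b, (1 - c₄ / (l : ℝ) ^ (2 * α)) with hPdef
    have hstep1 : P ≤ Real.exp (-∑ l ∈ Finset.Icc (a1 + 1) b, c₄ / (l : ℝ) ^ (2 * α)) := by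
      calc P ≤ ∏ l ∈ Finset.Icc (a1 + 1) b, Real.exp (-(c₄ / (l : ℝ) ^ (2 * α))) := by
            refine Finset.prod_le_prod (fun l hl => ?_) (fun l hl => ?_)
            · have hl1 : 1 ≤ l := by have := (Finset.mem_Icc.mp hl).1; omega
              exact (hqpos l hl1).le
            · have := Real.add_one_le_exp (-(c₄ / (l : ℝ) ^ (2 * α)))
              linarith
        _ = Real.exp (∑ l ∈ Finset.Icc (a1 + 1) b, -(c₄ / (l : ℝ) ^ (2 * α))) :=
            (Real.exp_sum _ _).symm
        _ = Real.exp (-∑ l ∈ Finset.Icc (a1 + 1) b, c₄ / (l : ℝ) ^ (2 * α)) := by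
            rw [Finset.sum_neg_distrib]
    have hstep2 : (c₄ / p) * (((b + 1 : ℕ) : ℝ) ^ p - ((a1 + 1 : ℕ) : ℝ) ^ p)
        ≤ ∑ l ∈ Finset.Icc (a1 + 1) b, c₄ / (l : ℝ) ^ (2 * α) := by
      have htel := telescope_sum (fun i => ((i : ℕ) : ℝ) ^ p) b (a1 + 1) (by omega)
      have hpt : ∀ l ∈ Finset.Icc (a1 + 1) b,
          (c₄ / p) * ((((l + 1 : ℕ)) : ℝ) ^ p - ((l : ℕ) : ℝ) ^ p)
            ≤ c₄ / (l : ℝ) ^ (2 * α) := by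
        intro l hl
        have hl1 : 1 ≤ l := by have := (Finset.mem_Icc.mp hl).1; omega
        have hlR : (1:ℝ) ≤ (l : ℝ) := by exact_mod_cast hl1
        have hlpos : (0:ℝ) < (l : ℝ) := by linarith
        have h1 : (((l + 1 : ℕ)) : ℝ) ^ p - ((l : ℕ) : ℝ) ^ p
            ≤ |p| * (l : ℝ) ^ (p - 1) * |((l:ℝ) + 1) - (l:ℝ)| := by
          push_cast
          calc ((l:ℝ) + 1) ^ p - (l:ℝ) ^ p ≤ |((l:ℝ) + 1) ^ p - (l:ℝ) ^ p| := le_abs_self _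
            _ ≤ |p| * (l : ℝ) ^ (p - 1) * |((l:ℝ) + 1) - (l:ℝ)| := by
                have := abs_rpow_sub_rpow_le (p := p) (b := (l:ℝ)) hlpos hp1
                  (show (l:ℝ) ≤ (l:ℝ) + 1 by linarith) le_rfl
                exact this
        have h2 : |((l:ℝ) + 1) - (l:ℝ)| = 1 := by simp
        have h3 : |p| = p := abs_of_pos hp0
        have h4 : (l : ℝ) ^ (p - 1) = ((l : ℝ) ^ (2 * α))⁻¹ := by
          rw [show p - 1 = -(2 * α) by rw [hpdef]; ring, Real.rpow_neg hlpos.le]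
        rw [h2, h3, h4, mul_one] at h1
        calc (c₄ / p) * ((((l + 1 : ℕ)) : ℝ) ^ p - ((l : ℕ) : ℝ) ^ p)
            ≤ (c₄ / p) * (p * ((l : ℝ) ^ (2 * α))⁻¹) :=
              mul_le_mul_of_nonneg_left h1 (by positivity)
          _ = c₄ / (l : ℝ) ^ (2 * α) := by field_simp
      calc (c₄ / p) * (((b + 1 : ℕ) : ℝ) ^ p - ((a1 + 1 : ℕ) : ℝ) ^ p)
          = (c₄ / p) * ∑ l ∈ Finset.Icc (a1 + 1) b,
              ((((l + 1 : ℕ)) : ℝ) ^ p - ((l : ℕ) : ℝ) ^ p) := by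
            rw [htel]
        _ = ∑ l ∈ Finset.Icc (a1 + 1) b,
              (c₄ / p) * ((((l + 1 : ℕ)) : ℝ) ^ p - ((l : ℕ) : ℝ) ^ p) := by
            rw [Finset.mul_sum]
        _ ≤ ∑ l ∈ Finset.Icc (a1 + 1) b, c₄ / (l : ℝ) ^ (2 * α) := Finset.sum_le_sum hpt
    -- comparison of a, b with m, n
    have h_n : c * (n : ℝ) ^ p ≤ (c₄ / p) * ((b + 1 : ℕ) : ℝ) ^ p := by
      have hnlt' : (n : ℝ) < (n₀ : ℝ) * ((b : ℝ) + 1) := by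
        have h1 : n < n₀ * (b + 1) := by
          have h2 : n₀ * (b + 1) = b * n₀ + n₀ := by ring
          omega
        calc (n:ℝ) < ((n₀ * (b + 1) : ℕ) : ℝ) := by exact_mod_cast h1
          _ = (n₀ : ℝ) * ((b : ℝ) + 1) := by push_cast; ring
      have hdiv : (n : ℝ) / (n₀ : ℝ) ≤ (b : ℝ) + 1 := by
        rw [div_le_iff₀ hn₀R]
        nlinarith
      have hrpow : ((n : ℝ) / (n₀ : ℝ)) ^ p ≤ ((b : ℝ) + 1) ^ p :=
        Real.rpow_le_rpow (by positivity) hdiv hp0.le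
      have hdivpow : ((n : ℝ) / (n₀ : ℝ)) ^ p = (n : ℝ) ^ p / (n₀ : ℝ) ^ p :=
        Real.div_rpow (by positivity) hn₀R.le p
      have hfinal : (c₄ / p) * ((n : ℝ) ^ p / (n₀ : ℝ) ^ p) = c * (n : ℝ) ^ p := by
        rw [hcdef]
        field_simp
        try ring
      calc c * (n : ℝ) ^ p = (c₄ / p) * ((n : ℝ) ^ p / (n₀ : ℝ) ^ p) := hfinal.symm
        _ = (c₄ / p) * ((n : ℝ) / (n₀ : ℝ)) ^ p := by rw [hdivpow]
        _ ≤ (c₄ / p) * ((b : ℝ) + 1) ^ p :=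
            mul_le_mul_of_nonneg_left hrpow (by positivity)
        _ = (c₄ / p) * ((b + 1 : ℕ) : ℝ) ^ p := by push_cast; ring
    have h_m : (c₄ / p) * ((a1 + 1 : ℕ) : ℝ) ^ p ≤ c * (m : ℝ) ^ p + 2 * c₄ / p := by
      have hF2R : ((a1:ℝ)) * (n₀:ℝ) ≤ (m:ℝ) + (n₀:ℝ) := by exact_mod_cast hF2
      have ha1R : (a1:ℝ) ≤ (m:ℝ) / (n₀:ℝ) + 1 := by
        rw [show (m:ℝ) / (n₀:ℝ) + 1 = ((m:ℝ) + (n₀:ℝ)) / (n₀:ℝ) by field_simp,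
          le_div_iff₀ hn₀R]
        exact hF2R
      have h1 : ((a1 + 1 : ℕ) : ℝ) ^ p ≤ ((m : ℝ) / (n₀ : ℝ) + 2) ^ p := by
        refine Real.rpow_le_rpow (by positivity) ?_ hp0.le
        push_cast
        linarith
      have h2 : ((m : ℝ) / (n₀ : ℝ) + 2) ^ p ≤ ((m : ℝ) / (n₀ : ℝ)) ^ p + 2 ^ p :=
        rpow_add_le_add_rpow' (by positivity) (by norm_num) hp0.le hp1
      have h3 : (2 : ℝ) ^ p ≤ 2 := by
        calc (2:ℝ) ^ p ≤ (2:ℝ) ^ (1:ℝ) := Real.rpow_le_rpow_of_exponent_le one_le_two hp1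
          _ = 2 := Real.rpow_one 2
      have h4 : ((m : ℝ) / (n₀ : ℝ)) ^ p = (m : ℝ) ^ p / (n₀ : ℝ) ^ p :=
        Real.div_rpow (by positivity) hn₀R.le p
      have h5 : (c₄ / p) * ((m : ℝ) ^ p / (n₀ : ℝ) ^ p) = c * (m : ℝ) ^ p := by
        rw [hcdef]
        field_simp
        try ring
      calc (c₄ / p) * ((a1 + 1 : ℕ) : ℝ) ^ p
          ≤ (c₄ / p) * (((m : ℝ) / (n₀ : ℝ)) ^ p + 2) := by
            refine mul_le_mul_of_nonneg_left ?_ (by positivity)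
            calc ((a1 + 1 : ℕ) : ℝ) ^ p ≤ ((m : ℝ) / (n₀ : ℝ) + 2) ^ p := h1
              _ ≤ ((m : ℝ) / (n₀ : ℝ)) ^ p + 2 ^ p := h2
              _ ≤ ((m : ℝ) / (n₀ : ℝ)) ^ p + 2 := by linarith
        _ = (c₄ / p) * ((m : ℝ) ^ p / (n₀ : ℝ) ^ p) + 2 * c₄ / p := by
            rw [h4]; ring
        _ = c * (m : ℝ) ^ p + 2 * c₄ / p := by rw [h5]
    have hPexp : P ≤ Real.exp (c * (m : ℝ) ^ p - c * (n : ℝ) ^ p + 2 * c₄ / p) := by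
      refine hstep1.trans (Real.exp_le_exp.mpr ?_)
      have := hstep2
      linarith
    -- final assembly
    have hMtot : ((M:ℝ) ^ lenTop) ^ s * ((M:ℝ) ^ (n₀ + 1)) ^ s ≤ ((M:ℝ) ^ (2 * n₀)) ^ s := by
      rw [← Real.mul_rpow (by positivity) (by positivity), ← pow_add]
      refine Real.rpow_le_rpow (by positivity) ?_ hs.le
      exact pow_le_pow_right₀ hM (by omega)
    calc ((M:ℝ) ^ lenTop) ^ s * (((M:ℝ) ^ (n₀ + 1)) ^ s * P)
        ≤ ((M:ℝ) ^ (2 * n₀)) ^ s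
            * Real.exp (c * (m : ℝ) ^ p - c * (n : ℝ) ^ p + 2 * c₄ / p) := by
          have hP0 : 0 ≤ P := by
            refine Finset.prod_nonneg fun l hl => ?_
            have hl1 : 1 ≤ l := by have := (Finset.mem_Icc.mp hl).1; omega
            exact (hqpos l hl1).le
          calc ((M:ℝ) ^ lenTop) ^ s * (((M:ℝ) ^ (n₀ + 1)) ^ s * P)
              = (((M:ℝ) ^ lenTop) ^ s * ((M:ℝ) ^ (n₀ + 1)) ^ s) * P := by ring
            _ ≤ ((M:ℝ) ^ (2 * n₀)) ^ s
                * Real.exp (c * (m : ℝ) ^ p - c * (n : ℝ) ^ p + 2 * c₄ / p) := by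
                refine mul_le_mul hMtot hPexp hP0 (by positivity)
      _ ≤ C * Real.exp (c * (m : ℝ) ^ p - c * (n : ℝ) ^ p) := by
          rw [hCdef, Real.exp_add, Real.exp_add]
          have hone : (1:ℝ) ≤ Real.exp (c * (n₀:ℝ)) := by
            have := Real.add_one_le_exp (c * (n₀:ℝ))
            nlinarith [mul_pos hc hn₀R]
          have hexp1 : Real.exp (2 * c₄ / p) ≤ Real.exp (2 * c₄ / p) * Real.exp (c * (n₀:ℝ)) :=
            le_mul_of_one_le_right (Real.exp_pos _).le hone
          calc ((M:ℝ) ^ (2 * n₀)) ^ s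
                * (Real.exp (c * (m : ℝ) ^ p - c * (n : ℝ) ^ p) * Real.exp (2 * c₄ / p))
              ≤ ((M:ℝ) ^ (2 * n₀)) ^ s
                * (Real.exp (c * (m : ℝ) ^ p - c * (n : ℝ) ^ p)
                  * (Real.exp (2 * c₄ / p) * Real.exp (c * (n₀:ℝ)))) := by
                refine mul_le_mul_of_nonneg_left ?_ (by positivity)
                exact mul_le_mul_of_nonneg_left hexp1 (Real.exp_pos _).le
            _ = ((M:ℝ) ^ (2 * n₀)) ^ s * (Real.exp (2 * c₄ / p) * Real.exp (c * (n₀:ℝ)))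
                * Real.exp (c * (m : ℝ) ^ p - c * (n : ℝ) ^ p) := by ring
  · -- short case: no full block
    push_neg at hcase
    have hbb : (b + 1) * n₀ ≤ a1 * n₀ := Nat.mul_le_mul (by omega) (le_refl n₀)
    have hshort' : n < m + n₀ := by
      calc n < (b + 1) * n₀ := hF5
        _ ≤ a1 * n₀ := hbb
        _ ≤ m + n₀ := hF2
    have hshort : n - m + 1 ≤ n₀ := by omega
    have hnm : (n : ℝ) ≤ (m : ℝ) + (n₀ : ℝ) := by
      have : n ≤ m + n₀ := by omega
      exact_mod_cast this
    calc ∫⁻ ω, ENNReal.ofReal (‖blockProd T ω (n - m + 1) n ψ₀‖ ^ (-s)) ∂μ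
        ≤ ∫⁻ _, ENNReal.ofReal (((M:ℝ) ^ (2 * n₀)) ^ s) ∂μ := by
          refine lintegral_mono fun ω => ENNReal.ofReal_le_ofReal ?_
          exact (hup _ _ ω).trans (hMup _ _ (by omega))
      _ = ENNReal.ofReal (((M:ℝ) ^ (2 * n₀)) ^ s) := by simp [lintegral_const]
      _ ≤ ENNReal.ofReal (C * Real.exp (c * (m : ℝ) ^ p - c * (n : ℝ) ^ p)) := by
          refine ENNReal.ofReal_le_ofReal ?_
          have hnp : (n : ℝ) ^ p ≤ (m : ℝ) ^ p + (n₀ : ℝ) := by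
            calc (n : ℝ) ^ p ≤ ((m : ℝ) + (n₀ : ℝ)) ^ p :=
                  Real.rpow_le_rpow (by positivity) hnm hp0.le
              _ ≤ (m : ℝ) ^ p + (n₀ : ℝ) ^ p :=
                  rpow_add_le_add_rpow' (by positivity) (by positivity) hp0.le hp1
              _ ≤ (m : ℝ) ^ p + (n₀ : ℝ) := by
                  have h1 : (n₀:ℝ) ^ p ≤ (n₀:ℝ) ^ (1:ℝ) :=
                    Real.rpow_le_rpow_of_exponent_le (by exact_mod_cast hn₀) hp1
                  rw [Real.rpow_one] at h1
                  linarith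
          have hexparg : 0 ≤ 2 * c₄ / p + c * (n₀:ℝ) + (c * (m : ℝ) ^ p - c * (n : ℝ) ^ p) := by
            have h1 : c * (n : ℝ) ^ p ≤ c * (m : ℝ) ^ p + c * (n₀:ℝ) := by
              calc c * (n : ℝ) ^ p ≤ c * ((m : ℝ) ^ p + (n₀ : ℝ)) :=
                    mul_le_mul_of_nonneg_left hnp hc.le
                _ = c * (m : ℝ) ^ p + c * (n₀:ℝ) := by ring
            have h2 : 0 < 2 * c₄ / p := by positivity
            linarith
          have hone : (1:ℝ) ≤ Real.exp (2 * c₄ / p + c * (n₀:ℝ)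
              + (c * (m : ℝ) ^ p - c * (n : ℝ) ^ p)) := by
            have := Real.add_one_le_exp (2 * c₄ / p + c * (n₀:ℝ)
              + (c * (m : ℝ) ^ p - c * (n : ℝ) ^ p))
            linarith
          calc ((M:ℝ) ^ (2 * n₀)) ^ s
              = ((M:ℝ) ^ (2 * n₀)) ^ s * 1 := (mul_one _).symm
            _ ≤ ((M:ℝ) ^ (2 * n₀)) ^ s * Real.exp (2 * c₄ / p + c * (n₀:ℝ)
                + (c * (m : ℝ) ^ p - c * (n : ℝ) ^ p)) :=
                mul_le_mul_of_nonneg_left hone (by positivity)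
            _ = C * Real.exp (c * (m : ℝ) ^ p - c * (n : ℝ) ^ p) := by
                rw [hCdef, Real.exp_add]
                ring
end
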